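/- arXiv:2603.03973 — 7 statements merged into one kernel-verified Lean document; each statement's English description precedes it below -/
import Mathlib

section
/- Let E be a real Banach space, let a_u < b_u and a_v < b_v be real numbers, and set h_u = b_u - a_u, h_v = b_v - a_v. Let ψ_u, ψ_v : ℝ → ℝ be differentiable on [a_u, b_u] and [a_v, b_v] respectively with |ψ_u'(u)| ≤ K_u on [a_u, b_u] and |ψ_v'(v)| ≤ K_v on [a_v, b_v], and let φ, ε : ℝ → E be differentiable with ‖φ'(u)‖ ≤ M_u on [a_u, b_u] and ‖ε'(v)‖ ≤ M_v on [a_v, b_v]. Fix A, B, κ_u, κ_v ∈ ℝ and x_i ∈ E, and define the exact update X = A•x_i + B•(∫_{a_u}^{b_u} ψ_u'(u)•φ(u) du + ∫_{a_v}^{b_v} ψ_v'(v)•ε(v) dv) and the first-order predictor X₁ = A•x_i + B•((ψ_u(b_u) - ψ_u(a_u) + κ_u h_u²)•φ(a_u) + (ψ_v(b_v) - ψ_v(a_v) + κ_v h_v²)•ε(a_v)). Then ‖X - X₁‖ ≤ |B| · ((K_u M_u / 2 + |κ_u| ‖φ(a_u)‖) h_u² + (K_v M_v / 2 + |κ_v|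 ‖ε(a_v)‖) h_v²); in particular the local truncation error of the first-order predictor is O(h_u² + h_v²). -/
open MeasureTheory intervalIntegral

lemma dual_solver_key {E : Type*} [NormedAddCommGroup E] [NormedSpace ℝ E] [CompleteSpace E]
    (a b : ℝ) (hab : a < b) (ψ ψ' : ℝ → ℝ) (φ φ' : ℝ → E) (K M : ℝ)
    (hψ : ∀ u ∈ Set.Icc a b, HasDerivAt ψ (ψ' u) u)
    (hψK : ∀ u ∈ Set.Icc a b, |ψ' u| ≤ K)
    (hφ : ∀ u ∈ Set.Icc a b, HasDerivAt φ (φ' u) u)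
    (hφM : ∀ u ∈ Set.Icc a b, ‖φ' u‖ ≤ M) :
    ‖(∫ u in a..b, ψ' u • φ u) - (ψ b - ψ a) • φ a‖ ≤ K * M / 2 * (b - a) ^ 2 := by
  have haIcc : a ∈ Set.Icc a b := Set.left_mem_Icc.2 hab.le
  have hK0 : 0 ≤ K := (abs_nonneg _).trans (hψK a haIcc)
  have hM0 : 0 ≤ M := (norm_nonneg _).trans (hφM a haIcc)
  -- Lipschitz bound for φ
  have hφsub : ∀ u ∈ Set.Icc a b, ‖φ u - φ a‖ ≤ M * (u - a) := by
    intro u hu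
    have h := Convex.norm_image_sub_le_of_norm_hasDerivWithin_le
      (f := φ) (f' := φ') (s := Set.Icc a b)
      (fun x hx => (hφ x hx).hasDerivWithinAt) hφM (convex_Icc a b) haIcc hu
    simpa [Real.norm_eq_abs, abs_of_nonneg (sub_nonneg.2 hu.1)] using h
  have hφbound : ∀ u ∈ Set.Icc a b, ‖φ u‖ ≤ ‖φ a‖ + M * (b - a) := by
    intro u hu
    have h1 := hφsub u hu
    have h2 : M * (u - a) ≤ M * (b - a) :=
      mul_le_mul_of_nonneg_left (by linarith [hu.2]) hM0
    calc ‖φ u‖ ≤ ‖φ a‖ + ‖φ u - φ a‖ := by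
          simpa using norm_add_le (φ a) (φ u - φ a)
      _ ≤ ‖φ a‖ + M * (b - a) := by linarith
  -- measurability
  have hψ'ae : ψ' =ᵐ[volume.restrict (Set.Ioc a b)] deriv ψ := by
    rw [← Measure.restrict_congr_set Ioo_ae_eq_Ioc]
    refine (ae_restrict_iff' measurableSet_Ioo).2 (Filter.Eventually.of_forall ?_)
    intro u hu
    exact ((hψ u (Set.mem_Icc_of_Ioo hu)).deriv).symm
  have hψ'meas : AEStronglyMeasurable ψ' (volume.restrict (Set.Ioc a b)) :=
    ((stronglyMeasurable_deriv ψ).aestronglyMeasurable).congr hψ'ae.symm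
  have hφcont : ContinuousOn φ (Set.Icc a b) :=
    fun u hu => (hφ u hu).continuousAt.continuousWithinAt
  have hφmeas : AEStronglyMeasurable φ (volume.restrict (Set.Ioc a b)) :=
    (hφcont.mono Set.Ioc_subset_Icc_self).aestronglyMeasurable measurableSet_Ioc
  have int1 : IntervalIntegrable (fun u => ψ' u • φ u) volume a b := by
    rw [intervalIntegrable_iff_integrableOn_Ioc_of_le hab.le]
    refine Integrable.mono' (g := fun _ => K * (‖φ a‖ + M * (b - a)))
      (integrableOn_const measure_Ioc_lt_top.ne) (hψ'meas.smul hφmeas) ?_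
    refine (ae_restrict_iff' measurableSet_Ioc).2 (Filter.Eventually.of_forall ?_)
    intro u hu
    rw [norm_smul, Real.norm_eq_abs]
    exact mul_le_mul (hψK u (Set.Ioc_subset_Icc_self hu))
      (hφbound u (Set.Ioc_subset_Icc_self hu)) (norm_nonneg _) hK0
  have int2 : IntervalIntegrable (fun u => ψ' u • φ a) volume a b := by
    rw [intervalIntegrable_iff_integrableOn_Ioc_of_le hab.le]
    refine Integrable.mono' (g := fun _ => K * ‖φ a‖)
      (integrableOn_const measure_Ioc_lt_top.ne) (hψ'meas.smul aestronglyMeasurable_const) ?_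
    refine (ae_restrict_iff' measurableSet_Ioc).2 (Filter.Eventually.of_forall ?_)
    intro u hu
    rw [norm_smul, Real.norm_eq_abs]
    exact mul_le_mul_of_nonneg_right (hψK u (Set.Ioc_subset_Icc_self hu)) (norm_nonneg _)
  -- FTC
  have hFTC : (∫ u in a..b, ψ' u • φ a) = (ψ b - ψ a) • φ a := by
    rw [intervalIntegral.integral_eq_sub_of_hasDerivAt (f := fun u => ψ u • φ a)
      (fun u hu => (hψ u (by rwa [Set.uIcc_of_le hab.le] at hu)).smul_const (φ a)) int2,
      ← sub_smul]
  have hsplit : (∫ u in a..b, ψ' u • φ u) - (ψ b - ψ a) • φ a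
      = ∫ u in a..b, ψ' u • (φ u - φ a) := by
    rw [← hFTC, ← intervalIntegral.integral_sub int1 int2]
    congr 1; funext u; rw [smul_sub]
  rw [hsplit]
  have hIg : (∫ u in a..b, K * (M * (u - a))) = K * M / 2 * (b - a) ^ 2 := by
    have h0 : (∫ u in a..b, (u - a)) = (b - a) ^ 2 / 2 := by
      rw [intervalIntegral.integral_comp_sub_right (fun x => x) a, integral_id]
      ring
    rw [intervalIntegral.integral_const_mul, intervalIntegral.integral_const_mul, h0]
    ring
  have hb := intervalIntegral.norm_integral_le_abs_of_norm_le
    (f := fun u => ψ' u • (φ u - φ a)) (g := fun u => K * (M * (u - a)))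
    (μ := volume) (a := a) (b := b) ?_ ?_
  · rw [hIg, abs_of_nonneg (by positivity)] at hb
    exact hb
  · refine (ae_restrict_iff' measurableSet_uIoc).2 (Filter.Eventually.of_forall ?_)
    intro u hu
    rw [Set.uIoc_of_le hab.le] at hu
    have huI := Set.Ioc_subset_Icc_self hu
    rw [norm_smul, Real.norm_eq_abs]
    exact mul_le_mul (hψK u huI) (hφsub u huI) (norm_nonneg _) hK0
  · exact Continuous.intervalIntegrable (by continuity) a b

/-- Local truncation error of the first-order predictor of Dual-Solver. -/
theorem dual_solver_first_order_predictor_lte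
    {E : Type*} [NormedAddCommGroup E] [NormedSpace ℝ E] [CompleteSpace E]
    (a_u b_u a_v b_v : ℝ) (hab_u : a_u < b_u) (hab_v : a_v < b_v)
    (ψu ψu' ψv ψv' : ℝ → ℝ) (φ φ' ε ε' : ℝ → E)
    (Ku Kv Mu Mv : ℝ)
    (hψu : ∀ u ∈ Set.Icc a_u b_u, HasDerivAt ψu (ψu' u) u)
    (hψuK : ∀ u ∈ Set.Icc a_u b_u, |ψu' u| ≤ Ku)
    (hψv : ∀ v ∈ Set.Icc a_v b_v, HasDerivAt ψv (ψv' v) v)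
    (hψvK : ∀ v ∈ Set.Icc a_v b_v, |ψv' v| ≤ Kv)
    (hφ : ∀ u ∈ Set.Icc a_u b_u, HasDerivAt φ (φ' u) u)
    (hφM : ∀ u ∈ Set.Icc a_u b_u, ‖φ' u‖ ≤ Mu)
    (hε : ∀ v ∈ Set.Icc a_v b_v, HasDerivAt ε (ε' v) v)
    (hεM : ∀ v ∈ Set.Icc a_v b_v, ‖ε' v‖ ≤ Mv)
    (A B κu κv : ℝ) (x_i : E) :
    ‖(A • x_i + B • ((∫ u in a_u..b_u, ψu' u • φ u) + ∫ v in a_v..b_v, ψv' v • ε v))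
      - (A • x_i + B • ((ψu b_u - ψu a_u + κu * (b_u - a_u) ^ 2) • φ a_u
          + (ψv b_v - ψv a_v + κv * (b_v - a_v) ^ 2) • ε a_v))‖
    ≤ |B| * ((Ku * Mu / 2 + |κu| * ‖φ a_u‖) * (b_u - a_u) ^ 2
        + (Kv * Mv / 2 + |κv| * ‖ε a_v‖) * (b_v - a_v) ^ 2) := by
  set Iu := ∫ u in a_u..b_u, ψu' u • φ u
  set Iv := ∫ v in a_v..b_v, ψv' v • ε v
  have keyu := dual_solver_key a_u b_u hab_u ψu ψu' φ φ' Ku Mu hψu hψuK hφ hφM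
  have keyv := dual_solver_key a_v b_v hab_v ψv ψv' ε ε' Kv Mv hψv hψvK hε hεM
  have e1 : (A • x_i + B • (Iu + Iv))
      - (A • x_i + B • ((ψu b_u - ψu a_u + κu * (b_u - a_u) ^ 2) • φ a_u
          + (ψv b_v - ψv a_v + κv * (b_v - a_v) ^ 2) • ε a_v))
      = B • (((Iu - (ψu b_u - ψu a_u) • φ a_u) - (κu * (b_u - a_u) ^ 2) • φ a_u)
          + ((Iv - (ψv b_v - ψv a_v) • ε a_v) - (κv * (b_v - a_v) ^ 2) • ε a_v)) := by
    rw [add_sub_add_left_eq_sub, ← smul_sub]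
    congr 1
    rw [add_smul, add_smul]
    abel
  rw [e1, norm_smul, Real.norm_eq_abs]
  have hu2 : ‖(Iu - (ψu b_u - ψu a_u) • φ a_u) - (κu * (b_u - a_u) ^ 2) • φ a_u‖
      ≤ Ku * Mu / 2 * (b_u - a_u) ^ 2 + |κu| * (b_u - a_u) ^ 2 * ‖φ a_u‖ := by
    refine (norm_sub_le _ _).trans ?_
    rw [norm_smul, Real.norm_eq_abs, abs_mul, abs_of_nonneg (sq_nonneg (b_u - a_u))]
    exact add_le_add keyu le_rfl
  have hv2 : ‖(Iv - (ψv b_v - ψv a_v) • ε a_v) - (κv * (b_v - a_v) ^ 2) • ε a_v‖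
      ≤ Kv * Mv / 2 * (b_v - a_v) ^ 2 + |κv| * (b_v - a_v) ^ 2 * ‖ε a_v‖ := by
    refine (norm_sub_le _ _).trans ?_
    rw [norm_smul, Real.norm_eq_abs, abs_mul, abs_of_nonneg (sq_nonneg (b_v - a_v))]
    exact add_le_add keyv le_rfl
  have hnorm := (norm_add_le _ _).trans (add_le_add hu2 hv2)
  calc |B| * ‖_‖ ≤ |B| * ((Ku * Mu / 2 * (b_u - a_u) ^ 2 + |κu| * (b_u - a_u) ^ 2 * ‖φ a_u‖)
        + (Kv * Mv / 2 * (b_v - a_v) ^ 2 + |κv| * (b_v - a_v) ^ 2 * ‖ε a_v‖)) :=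
      mul_le_mul_of_nonneg_left hnorm (abs_nonneg B)
    _ = |B| * ((Ku * Mu / 2 + |κu| * ‖φ a_u‖) * (b_u - a_u) ^ 2
        + (Kv * Mv / 2 + |κv| * ‖ε a_v‖) * (b_v - a_v) ^ 2) := by ring
end

section
/- Let E be a real Banach space and let a₋ < a < b be real numbers; set h₋ = a - a₋, h = b - a and r = h₋ / h. Let ψ : ℝ → ℝ be twice differentiable on [a₋, b] with |ψ'(u)| ≤ K₁ and |ψ''(u)| ≤ K₂ on [a, b], and let φ : ℝ → E be twice differentiable on [a₋, b] with ‖φ'(u)‖ ≤ M₁ and ‖φ''(u)‖ ≤ M₂ on [a₋, b]. Fix κ ∈ ℝ, write Δψ = ψ(b) - ψ(a) and Δφ₋ = φ(a) - φ(a₋), and define the exact integral I = ∫_a^b ψ'(u)•φ(u) du and the second-order backward-difference approximation I₂ = (Δψ)•φ(a) + ((Δψ + κh²)/(2r))•Δφ₋. Then ‖I - I₂‖ ≤ (M₁K₂/4 + |κ|M₁/2 + K₁M₂/6) h³ + (M₂ h₋ / 4)(K₁ h² + |κ| h³); in particular, when the step ratio h₋/h is bounded, the local truncation error of the second-order predictor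 is O(h³). -/
open intervalIntegral MeasureTheory Set

lemma int_lin_c (s t c : ℝ) : ∫ u in s..t, (u - c) = ((t - c)^2 - (s - c)^2) / 2 := by
  rw [intervalIntegral.integral_comp_sub_right (fun x : ℝ => x) c, integral_id]

lemma int_sq_c (s t c : ℝ) : ∫ u in s..t, (u - c)^2 = ((t - c)^3 - (s - c)^3) / 3 := by
  rw [intervalIntegral.integral_comp_sub_right (fun x : ℝ => x^2) c, integral_pow]
  norm_num

set_option maxHeartbeats 1000000 in

/-- Local truncation error of (the u-component of) the second-order
backward-difference predictor of Dual-Solver. -/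
theorem dual_solver_second_order_predictor_lte
    {E : Type*} [NormedAddCommGroup E] [NormedSpace ℝ E] [CompleteSpace E]
    (aₘ a b : ℝ) (h₁ : aₘ < a) (h₂ : a < b)
    (ψ ψ' ψ'' : ℝ → ℝ) (φ φ' φ'' : ℝ → E)
    (K₁ K₂ M₁ M₂ κ : ℝ)
    (hψ : ∀ u ∈ Set.Icc aₘ b, HasDerivAt ψ (ψ' u) u)
    (hψ' : ∀ u ∈ Set.Icc aₘ b, HasDerivAt ψ' (ψ'' u) u)
    (hK₁ : ∀ u ∈ Set.Icc a b, |ψ' u| ≤ K₁)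
    (hK₂ : ∀ u ∈ Set.Icc a b, |ψ'' u| ≤ K₂)
    (hφ : ∀ u ∈ Set.Icc aₘ b, HasDerivAt φ (φ' u) u)
    (hφ' : ∀ u ∈ Set.Icc aₘ b, HasDerivAt φ' (φ'' u) u)
    (hM₁ : ∀ u ∈ Set.Icc aₘ b, ‖φ' u‖ ≤ M₁)
    (hM₂ : ∀ u ∈ Set.Icc aₘ b, ‖φ'' u‖ ≤ M₂) :
    ‖(∫ u in a..b, ψ' u • φ u)
      - ((ψ b - ψ a) • φ a
          + (((ψ b - ψ a) + κ * (b - a) ^ 2) / (2 * ((a - aₘ) / (b - a)))) • (φ a - φ aₘ))‖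
    ≤ (M₁ * K₂ / 4 + |κ| * M₁ / 2 + K₁ * M₂ / 6) * (b - a) ^ 3
        + (M₂ * (a - aₘ) / 4) * (K₁ * (b - a) ^ 2 + |κ| * (b - a) ^ 3) := by
  have hab : a ≤ b := h₂.le
  have hma : aₘ ≤ a := h₁.le
  have hmb : aₘ ≤ b := hma.trans hab
  have hpos : (0:ℝ) < b - a := sub_pos.2 h₂
  have hmpos : (0:ℝ) < a - aₘ := sub_pos.2 h₁
  have hIcc : Set.Icc a b ⊆ Set.Icc aₘ b := Set.Icc_subset_Icc_left hma
  have ha' : a ∈ Set.Icc aₘ b := ⟨hma, hab⟩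
  have hb' : b ∈ Set.Icc aₘ b := ⟨hmb, le_refl b⟩
  have ham' : aₘ ∈ Set.Icc aₘ b := ⟨le_refl aₘ, hmb⟩
  have haab : a ∈ Set.Icc a b := ⟨le_refl a, hab⟩
  -- nonnegativity of constants
  have hK₁0 : 0 ≤ K₁ := (abs_nonneg _).trans (hK₁ a haab)
  have hK₂0 : 0 ≤ K₂ := (abs_nonneg _).trans (hK₂ a haab)
  have hM₁0 : 0 ≤ M₁ := (norm_nonneg _).trans (hM₁ a ha')
  have hM₂0 : 0 ≤ M₂ := (norm_nonneg _).trans (hM₂ a ha')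
  -- continuity
  have cψ' : ContinuousOn ψ' (Set.Icc aₘ b) :=
    fun u hu => ((hψ' u hu).continuousAt).continuousWithinAt
  have cφ : ContinuousOn φ (Set.Icc aₘ b) :=
    fun u hu => ((hφ u hu).continuousAt).continuousWithinAt
  have cφ' : ContinuousOn φ' (Set.Icc aₘ b) :=
    fun u hu => ((hφ' u hu).continuousAt).continuousWithinAt
  -- Lipschitz bounds from second derivatives / first derivatives
  have lipφ' : ∀ x ∈ Set.Icc aₘ b, ∀ y ∈ Set.Icc aₘ b, ‖φ' y - φ' x‖ ≤ M₂ * |y - x| := by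
    intro x hx y hy
    simpa using Convex.norm_image_sub_le_of_norm_hasDerivWithin_le
      (f' := φ'') (fun u hu => (hφ' u hu).hasDerivWithinAt) hM₂ (convex_Icc _ _) hx hy
  have lipψ' : ∀ x ∈ Set.Icc a b, ∀ y ∈ Set.Icc a b, |ψ' y - ψ' x| ≤ K₂ * |y - x| := by
    intro x hx y hy
    simpa using Convex.norm_image_sub_le_of_norm_hasDerivWithin_le
      (f' := ψ'') (fun u hu => (hψ' u (hIcc hu)).hasDerivWithinAt) hK₂ (convex_Icc _ _) hx hy
  have lipψ : |ψ b - ψ a| ≤ K₁ * (b - a) := by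
    have := Convex.norm_image_sub_le_of_norm_hasDerivWithin_le
      (f' := ψ') (fun u hu => (hψ u (hIcc hu)).hasDerivWithinAt) hK₁ (convex_Icc a b)
      haab ⟨hab, le_refl b⟩
    simpa [abs_of_nonneg hpos.le] using this
  -- generic Taylor bounds
  have taylorL : ∀ s t : ℝ, s ∈ Set.Icc aₘ b → t ∈ Set.Icc aₘ b → s ≤ t →
      ‖φ t - φ s - (t - s) • φ' s‖ ≤ M₂ * (t - s)^2 / 2 := by
    intro s t hs ht hst
    have hsub : Set.uIcc s t ⊆ Set.Icc aₘ b := Set.uIcc_subset_Icc hs ht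
    have hint : IntervalIntegrable φ' volume s t := (cφ'.mono hsub).intervalIntegrable
    have ftc : ∫ u in s..t, φ' u = φ t - φ s :=
      integral_eq_sub_of_hasDerivAt (fun u hu => hφ u (hsub hu)) hint
    have hrepr : φ t - φ s - (t - s) • φ' s = ∫ u in s..t, (φ' u - φ' s) := by
      rw [intervalIntegral.integral_sub hint intervalIntegrable_const, ftc,
        intervalIntegral.integral_const]
    rw [hrepr]
    have hbd : ∀ᵐ u ∂volume.restrict (Set.uIoc s t), ‖φ' u - φ' s‖ ≤ M₂ * (u - s) := by
      refine (ae_restrict_iff' measurableSet_uIoc).2 (Filter.Eventually.of_forall fun u hu => ?_)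
      rw [Set.uIoc_of_le hst] at hu
      have hu' : u ∈ Set.Icc aₘ b := ⟨hs.1.trans hu.1.le, hu.2.trans ht.2⟩
      calc ‖φ' u - φ' s‖ ≤ M₂ * |u - s| := lipφ' s hs u hu'
        _ = M₂ * (u - s) := by rw [abs_of_nonneg (by linarith [hu.1.le])]
    calc ‖∫ u in s..t, (φ' u - φ' s)‖ ≤ |∫ u in s..t, M₂ * (u - s)| :=
          intervalIntegral.norm_integral_le_abs_of_norm_le hbd
            (((continuous_const.mul (continuous_id.sub continuous_const)).continuousOn :
              ContinuousOn (fun u : ℝ => M₂ * (u - s)) (Set.uIcc s t)).intervalIntegrable)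
      _ = M₂ * (t - s)^2 / 2 := by
          rw [intervalIntegral.integral_const_mul, int_lin_c,
            show M₂ * (((t - s)^2 - (s - s)^2)/2) = M₂ * (t-s)^2/2 by ring,
            abs_of_nonneg (by positivity)]
  have taylorR : ∀ s t : ℝ, s ∈ Set.Icc aₘ b → t ∈ Set.Icc aₘ b → s ≤ t →
      ‖φ t - φ s - (t - s) • φ' t‖ ≤ M₂ * (t - s)^2 / 2 := by
    intro s t hs ht hst
    have hsub : Set.uIcc s t ⊆ Set.Icc aₘ b := Set.uIcc_subset_Icc hs ht
    have hint : IntervalIntegrable φ' volume s t := (cφ'.mono hsub).intervalIntegrable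
    have ftc : ∫ u in s..t, φ' u = φ t - φ s :=
      integral_eq_sub_of_hasDerivAt (fun u hu => hφ u (hsub hu)) hint
    have hrepr : φ t - φ s - (t - s) • φ' t = ∫ u in s..t, (φ' u - φ' t) := by
      rw [intervalIntegral.integral_sub hint intervalIntegrable_const, ftc,
        intervalIntegral.integral_const]
    rw [hrepr]
    have hbd : ∀ᵐ u ∂volume.restrict (Set.uIoc s t), ‖φ' u - φ' t‖ ≤ M₂ * (t - u) := by
      refine (ae_restrict_iff' measurableSet_uIoc).2 (Filter.Eventually.of_forall fun u hu => ?_)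
      rw [Set.uIoc_of_le hst] at hu
      have hu' : u ∈ Set.Icc aₘ b := ⟨hs.1.trans hu.1.le, hu.2.trans ht.2⟩
      calc ‖φ' u - φ' t‖ ≤ M₂ * |u - t| := lipφ' t ht u hu'
        _ = M₂ * (t - u) := by rw [abs_of_nonpos (by linarith [hu.2]), neg_sub]
    calc ‖∫ u in s..t, (φ' u - φ' t)‖ ≤ |∫ u in s..t, M₂ * (t - u)| :=
          intervalIntegral.norm_integral_le_abs_of_norm_le hbd
            (((continuous_const.mul (continuous_const.sub continuous_id)).continuousOn :
              ContinuousOn (fun u : ℝ => M₂ * (t - u)) (Set.uIcc s t)).intervalIntegrable)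
      _ = M₂ * (t - s)^2 / 2 := by
          have : (fun u : ℝ => M₂ * (t - u)) = fun u => (-M₂) * (u - t) := by
            funext u; ring
          rw [this, intervalIntegral.integral_const_mul, int_lin_c]
          rw [show (-M₂) * (((t - t)^2 - (s - t)^2)/2) = M₂ * (t - s)^2/2 by ring]
          rw [abs_of_nonneg (by positivity)]
  -- integrability on [a,b]
  have hsub : Set.uIcc a b ⊆ Set.Icc aₘ b := Set.uIcc_subset_Icc ha' hb'
  have iψ' : IntervalIntegrable ψ' volume a b := (cψ'.mono hsub).intervalIntegrable
  have iA1 : IntervalIntegrable (fun u => ψ' u • φ u) volume a b :=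
    ((cψ'.mono hsub).smul (cφ.mono hsub)).intervalIntegrable
  have iA3 : IntervalIntegrable (fun u => ψ' u * (u - a)) volume a b :=
    ((cψ'.mono hsub).mul ((continuous_id.sub continuous_const).continuousOn)).intervalIntegrable
  have ftcψ : ∫ u in a..b, ψ' u = ψ b - ψ a :=
    integral_eq_sub_of_hasDerivAt (fun u hu => hψ u (hsub hu)) iψ'
  set m : ℝ := (a + b) / 2 with hm_def
  have hm' : m ∈ Set.Icc a b := ⟨by rw [hm_def]; linarith, by rw [hm_def]; linarith⟩
  have iA5 : IntervalIntegrable (fun u => (ψ' u - ψ' m) * (u - m)) volume a b :=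
    (((cψ'.mono hsub).sub continuousOn_const).mul
      ((continuous_id.sub continuous_const).continuousOn)).intervalIntegrable
  have i5b : IntervalIntegrable (fun u => ψ' m * (u - m)) volume a b :=
    ((continuous_const.mul (continuous_id.sub continuous_const)).intervalIntegrable a b)
  have i5c : IntervalIntegrable (fun u => (b - a) / 2 * ψ' u) volume a b := iψ'.const_mul _
  -- quadrature identity for ∫ ψ'(u)(u-a)
  have hP : (∫ u in a..b, ψ' u * (u - a))
      = (∫ u in a..b, (ψ' u - ψ' m) * (u - m)) + (b - a) * (ψ b - ψ a) / 2 := by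
    have e1 : Set.EqOn (fun u => ψ' u * (u - a))
        (fun u => ((ψ' u - ψ' m) * (u - m) + ψ' m * (u - m)) + (b - a) / 2 * ψ' u)
        (Set.uIcc a b) := by
      intro u _
      simp only [hm_def]; ring
    rw [intervalIntegral.integral_congr e1,
      intervalIntegral.integral_add (iA5.add i5b) i5c,
      intervalIntegral.integral_add iA5 i5b,
      intervalIntegral.integral_const_mul, intervalIntegral.integral_const_mul,
      int_lin_c, ftcψ, hm_def]
    ring
  -- FTC-based expansion of the main integral
  have e2 : Set.EqOn (fun u => ψ' u • (φ u - φ a - (u - a) • φ' a))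
      (fun u => ψ' u • φ u - ψ' u • φ a - (ψ' u * (u - a)) • φ' a) (Set.uIcc a b) := by
    intro u _
    show ψ' u • (φ u - φ a - (u - a) • φ' a) = _
    rw [smul_sub, smul_sub, smul_smul]
  have i1b : IntervalIntegrable (fun u => ψ' u • φ a) volume a b :=
    ((cψ'.mono hsub).smul continuousOn_const).intervalIntegrable
  have i1c : IntervalIntegrable (fun u => (ψ' u * (u - a)) • φ' a) volume a b :=
    (((cψ'.mono hsub).mul ((continuous_id.sub continuous_const).continuousOn)).smul
      continuousOn_const).intervalIntegrable
  have hI : (∫ u in a..b, ψ' u • (φ u - φ a - (u - a) • φ' a))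
      = (∫ u in a..b, ψ' u • φ u) - (ψ b - ψ a) • φ a
        - (∫ u in a..b, ψ' u * (u - a)) • φ' a := by
    rw [intervalIntegral.integral_congr e2,
      intervalIntegral.integral_sub (iA1.sub i1b) i1c,
      intervalIntegral.integral_sub iA1 i1b,
      intervalIntegral.integral_smul_const, intervalIntegral.integral_smul_const, ftcψ]
  have hane : a - aₘ ≠ 0 := ne_of_gt hmpos
  have hbne : b - a ≠ 0 := ne_of_gt hpos
  set c : ℝ := ((ψ b - ψ a) + κ * (b - a) ^ 2) / (2 * ((a - aₘ) / (b - a))) with hc_def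
  have hch : c * (a - aₘ) = ((ψ b - ψ a) + κ * (b - a) ^ 2) * (b - a) / 2 := by
    rw [hc_def]
    field_simp
  -- key decomposition identity
  have key : (∫ u in a..b, ψ' u • φ u) - ((ψ b - ψ a) • φ a + c • (φ a - φ aₘ))
      = (∫ u in a..b, ψ' u • (φ u - φ a - (u - a) • φ' a))
        + ((∫ u in a..b, (ψ' u - ψ' m) * (u - m)) - κ * (b - a) ^ 3 / 2) • φ' a
        - c • (φ a - φ aₘ - (a - aₘ) • φ' a) := by
    have hsplit : c • (φ a - φ aₘ)
        = (c * (a - aₘ)) • φ' a + c • (φ a - φ aₘ - (a - aₘ) • φ' a) := by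
      rw [← smul_smul, ← smul_add]
      congr 1
      abel
    have hs2 : (∫ u in a..b, ψ' u * (u - a)) • φ' a
        = ((∫ u in a..b, (ψ' u - ψ' m) * (u - m)) - κ * (b - a) ^ 3 / 2) • φ' a
          + (c * (a - aₘ)) • φ' a := by
      rw [← add_smul]
      congr 1
      rw [hP, hch]
      ring
    rw [hsplit, hI, hs2]
    abel
  rw [key]
  -- triangle inequality
  refine le_trans ((norm_sub_le _ _).trans (add_le_add (norm_add_le _ _) le_rfl)) ?_
  rw [norm_smul, norm_smul, Real.norm_eq_abs, Real.norm_eq_abs]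
  -- Bound 1 : the Taylor remainder integral
  have B1 : ‖∫ u in a..b, ψ' u • (φ u - φ a - (u - a) • φ' a)‖
      ≤ K₁ * M₂ * (b - a) ^ 3 / 6 := by
    have hbd : ∀ᵐ u ∂volume.restrict (Set.uIoc a b),
        ‖ψ' u • (φ u - φ a - (u - a) • φ' a)‖ ≤ K₁ * (M₂ * (u - a) ^ 2 / 2) := by
      refine (ae_restrict_iff' measurableSet_uIoc).2 (Filter.Eventually.of_forall fun u hu => ?_)
      rw [Set.uIoc_of_le hab] at hu
      have huab : u ∈ Set.Icc a b := ⟨hu.1.le, hu.2⟩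
      rw [norm_smul, Real.norm_eq_abs]
      exact mul_le_mul (hK₁ u huab) (taylorL a u ha' (hIcc huab) hu.1.le) (norm_nonneg _) hK₁0
    calc ‖∫ u in a..b, ψ' u • (φ u - φ a - (u - a) • φ' a)‖
        ≤ |∫ u in a..b, K₁ * (M₂ * (u - a) ^ 2 / 2)| :=
          intervalIntegral.norm_integral_le_abs_of_norm_le hbd
            ((Continuous.intervalIntegrable (by fun_prop) _ _ :
              IntervalIntegrable (fun u : ℝ => K₁ * (M₂ * (u - a) ^ 2 / 2)) volume a b))
      _ = K₁ * M₂ * (b - a) ^ 3 / 6 := by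
          rw [intervalIntegral.integral_congr
              (g := fun u : ℝ => (K₁ * M₂ / 2) * (u - a) ^ 2) (fun u _ => by ring),
            intervalIntegral.integral_const_mul, int_sq_c,
            show K₁ * M₂ / 2 * (((b - a) ^ 3 - (a - a) ^ 3) / 3) = K₁ * M₂ * (b - a) ^ 3 / 6
              by ring]
          exact abs_of_nonneg (by positivity)
  -- Bound 2 : the midpoint quadrature error
  have B2 : |∫ u in a..b, (ψ' u - ψ' m) * (u - m)| ≤ K₂ * (b - a) ^ 3 / 12 := by
    have hbd : ∀ᵐ u ∂volume.restrict (Set.uIoc a b),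
        ‖(ψ' u - ψ' m) * (u - m)‖ ≤ K₂ * (u - m) ^ 2 := by
      refine (ae_restrict_iff' measurableSet_uIoc).2 (Filter.Eventually.of_forall fun u hu => ?_)
      rw [Set.uIoc_of_le hab] at hu
      have huab : u ∈ Set.Icc a b := ⟨hu.1.le, hu.2⟩
      rw [Real.norm_eq_abs, abs_mul]
      calc |ψ' u - ψ' m| * |u - m| ≤ (K₂ * |u - m|) * |u - m| :=
            mul_le_mul_of_nonneg_right (lipψ' m hm' u huab) (abs_nonneg _)
        _ = K₂ * (u - m) ^ 2 := by rw [mul_assoc, ← abs_mul, ← sq, abs_of_nonneg (sq_nonneg _)]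
    have := intervalIntegral.norm_integral_le_abs_of_norm_le hbd
      ((Continuous.intervalIntegrable (by fun_prop) _ _ :
        IntervalIntegrable (fun u : ℝ => K₂ * (u - m) ^ 2) volume a b))
    rw [Real.norm_eq_abs] at this
    refine this.trans ?_
    rw [intervalIntegral.integral_const_mul, int_sq_c, hm_def,
      show K₂ * (((b - (a + b) / 2) ^ 3 - (a - (a + b) / 2) ^ 3) / 3)
        = K₂ * (b - a) ^ 3 / 12 by ring]
    rw [abs_of_nonneg (div_nonneg (mul_nonneg hK₂0 (by positivity)) (by norm_num))]
  have B2' : |(∫ u in a..b, (ψ' u - ψ' m) * (u - m)) - κ * (b - a) ^ 3 / 2|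
      ≤ K₂ * (b - a) ^ 3 / 12 + |κ| * (b - a) ^ 3 / 2 := by
    refine (abs_sub _ _).trans (add_le_add B2 (le_of_eq ?_))
    rw [show κ * (b - a) ^ 3 / 2 = κ * ((b - a) ^ 3 / 2) by ring, abs_mul,
      abs_of_nonneg (by positivity : (0:ℝ) ≤ (b - a) ^ 3 / 2)]
    ring
  -- Bound 3 : the backward-difference remainder
  have hRB : ‖φ a - φ aₘ - (a - aₘ) • φ' a‖ ≤ M₂ * (a - aₘ) ^ 2 / 2 :=
    taylorR aₘ a ham' ha' hma
  have hnum : |(ψ b - ψ a) + κ * (b - a) ^ 2| ≤ K₁ * (b - a) + |κ| * (b - a) ^ 2 := by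
    refine (abs_add_le _ _).trans (add_le_add lipψ (le_of_eq ?_))
    rw [abs_mul, abs_of_nonneg (sq_nonneg (b - a))]
  have hden : (0:ℝ) < 2 * ((a - aₘ) / (b - a)) := by positivity
  have hcB : |c| ≤ (K₁ * (b - a) + |κ| * (b - a) ^ 2) / (2 * ((a - aₘ) / (b - a))) := by
    rw [hc_def, abs_div, abs_of_nonneg hden.le]
    exact div_le_div_of_nonneg_right hnum hden.le
  have hnum0 : (0:ℝ) ≤ K₁ * (b - a) + |κ| * (b - a) ^ 2 :=
    add_nonneg (mul_nonneg hK₁0 hpos.le) (by positivity)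
  have B3 : |c| * ‖φ a - φ aₘ - (a - aₘ) • φ' a‖
      ≤ M₂ * (a - aₘ) / 4 * (K₁ * (b - a) ^ 2 + |κ| * (b - a) ^ 3) := by
    calc |c| * ‖φ a - φ aₘ - (a - aₘ) • φ' a‖
        ≤ ((K₁ * (b - a) + |κ| * (b - a) ^ 2) / (2 * ((a - aₘ) / (b - a))))
            * (M₂ * (a - aₘ) ^ 2 / 2) :=
          mul_le_mul hcB hRB (norm_nonneg _) (div_nonneg hnum0 hden.le)
      _ = M₂ * (a - aₘ) / 4 * (K₁ * (b - a) ^ 2 + |κ| * (b - a) ^ 3) := by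
          field_simp
          ring
  -- put everything together
  have hφ'a : ‖φ' a‖ ≤ M₁ := hM₁ a ha'
  have Bmid : |(∫ u in a..b, (ψ' u - ψ' m) * (u - m)) - κ * (b - a) ^ 3 / 2| * ‖φ' a‖
      ≤ (K₂ * (b - a) ^ 3 / 12 + |κ| * (b - a) ^ 3 / 2) * M₁ :=
    mul_le_mul B2' hφ'a (norm_nonneg _)
      (add_nonneg (div_nonneg (mul_nonneg hK₂0 (by positivity)) (by norm_num)) (by positivity))
  nlinarith [mul_nonneg (mul_nonneg hM₁0 hK₂0) (pow_nonneg hpos.le 3), B1, Bmid, B3]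
end

section
/- Let E be a real Banach space, let a_u < b_u and a_v < b_v be real numbers, and set h_u = b_u - a_u, h_v = b_v - a_v. Let ψ_u, ψ_v : ℝ → ℝ be twice differentiable with |ψ_u'| ≤ K₁ᵘ, |ψ_u''| ≤ K₂ᵘ on [a_u, b_u] and |ψ_v'| ≤ K₁ᵛ, |ψ_v''| ≤ K₂ᵛ on [a_v, b_v], and let φ, ε : ℝ → E be twice differentiable with ‖φ'‖ ≤ M₁ᵘ, ‖φ''‖ ≤ M₂ᵘ on [a_u, b_u] and ‖ε'‖ ≤ M₁ᵛ, ‖ε''‖ ≤ M₂ᵛ on [a_v, b_v]. Fix A, B, κ_u, κ_v ∈ ℝ and x_i ∈ E, write Δψ_u = ψ_u(b_u) - ψ_u(a_u), Δφ = φ(b_u) - φ(a_u), Δψ_v = ψ_v(b_v) - ψ_v(a_v), Δε = ε(b_v) - ε(a_v), and define the exact update X = A•x_i + B•(∫_{a_u}^{b_u} ψ_u'(u)•φ(u) du + ∫_{a_v}^{b_v} ψ_v'(v)•ε(v) dv) and the second-order corrector X₂ = A•x_i + B•(Δψ_u•φ(a_u) + ((Δψ_u + κ_u h_u²)/2)•Δφ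 + Δψ_v•ε(a_v) + ((Δψ_v + κ_v h_v²)/2)•Δε). Then ‖X - X₂‖ ≤ |B| · ((M₁ᵘK₂ᵘ + K₁ᵘM₂ᵘ + |κ_u|M₁ᵘ) h_u³ + (M₁ᵛK₂ᵛ + K₁ᵛM₂ᵛ + |κ_v|M₁ᵛ) h_v³); in particular the local truncation error of the second-order corrector is O(h_u³ + h_v³). -/
open intervalIntegral

lemma dual_solver_single_interval_bound
    {E : Type*} [NormedAddCommGroup E] [NormedSpace ℝ E] [CompleteSpace E]
    (a b : ℝ) (hab : a < b)
    (ψ ψ' ψ'' : ℝ → ℝ) (φ φ' φ'' : ℝ → E) (K₁ K₂ M₁ M₂ κ : ℝ)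
    (hψ : ∀ u ∈ Set.Icc a b, HasDerivAt ψ (ψ' u) u)
    (hψ' : ∀ u ∈ Set.Icc a b, HasDerivAt ψ' (ψ'' u) u)
    (hK₁ : ∀ u ∈ Set.Icc a b, |ψ' u| ≤ K₁)
    (hK₂ : ∀ u ∈ Set.Icc a b, |ψ'' u| ≤ K₂)
    (hφ : ∀ u ∈ Set.Icc a b, HasDerivAt φ (φ' u) u)
    (hφ' : ∀ u ∈ Set.Icc a b, HasDerivAt φ' (φ'' u) u)
    (hM₁ : ∀ u ∈ Set.Icc a b, ‖φ' u‖ ≤ M₁)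
    (hM₂ : ∀ u ∈ Set.Icc a b, ‖φ'' u‖ ≤ M₂) :
    ‖(∫ u in a..b, ψ' u • φ u)
      - ((ψ b - ψ a) • φ a + (((ψ b - ψ a) + κ * (b - a) ^ 2) / 2) • (φ b - φ a))‖
    ≤ (M₁ * K₂ + K₁ * M₂ + |κ| * M₁) * (b - a) ^ 3 := by
  have hba : a ≤ b := hab.le
  have hh : (0:ℝ) < b - a := sub_pos.mpr hab
  set h : ℝ := b - a with hh_def
  have huIcc : Set.uIcc a b = Set.Icc a b := Set.uIcc_of_le hba
  have hIoc : Set.uIoc a b ⊆ Set.Icc a b := by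
    rw [Set.uIoc_of_le hba]; exact Set.Ioc_subset_Icc_self
  have haI : a ∈ Set.Icc a b := ⟨le_refl a, hba⟩
  -- continuity
  have cψ' : ContinuousOn ψ' (Set.Icc a b) := fun u hu => (hψ' u hu).continuousAt.continuousWithinAt
  have cφ : ContinuousOn φ (Set.Icc a b) := fun u hu => (hφ u hu).continuousAt.continuousWithinAt
  have cφ' : ContinuousOn φ' (Set.Icc a b) := fun u hu => (hφ' u hu).continuousAt.continuousWithinAt
  -- nonneg constants
  have hK₁0 : 0 ≤ K₁ := le_trans (abs_nonneg _) (hK₁ a haI)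
  have hK₂0 : 0 ≤ K₂ := le_trans (abs_nonneg _) (hK₂ a haI)
  have hM₁0 : 0 ≤ M₁ := le_trans (norm_nonneg _) (hM₁ a haI)
  have hM₂0 : 0 ≤ M₂ := le_trans (norm_nonneg _) (hM₂ a haI)
  have hdist : ∀ x ∈ Set.Icc a b, ∀ y ∈ Set.Icc a b, |y - x| ≤ h := by
    intro x hx y hy
    rw [abs_le]; constructor <;> [linarith [hx.2, hy.1]; linarith [hx.1, hy.2]]
  -- Lipschitz bounds via MVT
  have lipψ : ∀ x ∈ Set.Icc a b, ∀ y ∈ Set.Icc a b, |ψ y - ψ x| ≤ K₁ * |y - x| := by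
    intro x hx y hy
    have := (convex_Icc a b).norm_image_sub_le_of_norm_hasDerivWithin_le
      (fun u hu => (hψ u hu).hasDerivWithinAt) (fun u hu => by simpa [Real.norm_eq_abs] using hK₁ u hu) hx hy
    simpa [Real.norm_eq_abs] using this
  have lipψ' : ∀ x ∈ Set.Icc a b, ∀ y ∈ Set.Icc a b, |ψ' y - ψ' x| ≤ K₂ * |y - x| := by
    intro x hx y hy
    have := (convex_Icc a b).norm_image_sub_le_of_norm_hasDerivWithin_le
      (fun u hu => (hψ' u hu).hasDerivWithinAt) (fun u hu => by simpa [Real.norm_eq_abs] using hK₂ u hu) hx hy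
    simpa [Real.norm_eq_abs] using this
  have lipφ : ∀ x ∈ Set.Icc a b, ∀ y ∈ Set.Icc a b, ‖φ y - φ x‖ ≤ M₁ * |y - x| := by
    intro x hx y hy
    have := (convex_Icc a b).norm_image_sub_le_of_norm_hasDerivWithin_le
      (fun u hu => (hφ u hu).hasDerivWithinAt) hM₁ hx hy
    simpa [Real.norm_eq_abs] using this
  have lipφ' : ∀ x ∈ Set.Icc a b, ∀ y ∈ Set.Icc a b, ‖φ' y - φ' x‖ ≤ M₂ * |y - x| := by
    intro x hx y hy
    have := (convex_Icc a b).norm_image_sub_le_of_norm_hasDerivWithin_le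
      (fun u hu => (hφ' u hu).hasDerivWithinAt) hM₂ hx hy
    simpa [Real.norm_eq_abs] using this
  -- integrability
  have intψ' : IntervalIntegrable ψ' MeasureTheory.volume a b :=
    ContinuousOn.intervalIntegrable_of_Icc hba cψ'
  have intφ : IntervalIntegrable φ MeasureTheory.volume a b :=
    ContinuousOn.intervalIntegrable_of_Icc hba cφ
  have intφ'' : IntervalIntegrable φ' MeasureTheory.volume a b :=
    ContinuousOn.intervalIntegrable_of_Icc hba cφ'
  -- FTC
  have FTCψ : (∫ u in a..b, ψ' u) = ψ b - ψ a :=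
    integral_eq_sub_of_hasDerivAt (fun u hu => hψ u (huIcc ▸ hu)) intψ'
  have FTCφ : (∫ u in a..b, φ' u) = φ b - φ a :=
    integral_eq_sub_of_hasDerivAt (fun u hu => hφ u (huIcc ▸ hu)) intφ''
  -- pointwise bound 1
  have B1 : ∀ u ∈ Set.Icc a b, |ψ' u * h - (ψ b - ψ a)| ≤ K₂ * h * h := by
    intro u hu
    have e1 : ψ' u * h = ∫ _ in a..b, ψ' u := by
      rw [integral_const, smul_eq_mul]; ring
    rw [← FTCψ, e1, ← intervalIntegral.integral_sub intervalIntegrable_const intψ']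
    have := intervalIntegral.norm_integral_le_of_norm_le_const
      (f := fun s => ψ' u - ψ' s) (C := K₂ * h) (a := a) (b := b) ?_
    · calc |∫ s in a..b, (ψ' u - ψ' s)| ≤ K₂ * h * |b - a| := this
        _ = K₂ * h * h := by rw [abs_of_pos hh]
    · intro s hs
      have hs' : s ∈ Set.Icc a b := hIoc hs
      have : |ψ' u - ψ' s| ≤ K₂ * |u - s| := lipψ' s hs' u hu
      calc ‖ψ' u - ψ' s‖ = |ψ' u - ψ' s| := rfl
        _ ≤ K₂ * |u - s| := this
        _ ≤ K₂ * h := mul_le_mul_of_nonneg_left (hdist s hs' u hu) hK₂0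
  -- pointwise bound 2
  have B2 : ∀ u ∈ Set.Icc a b, ‖h • φ' u - (φ b - φ a)‖ ≤ M₂ * h * h := by
    intro u hu
    have e1 : h • φ' u = ∫ _ in a..b, φ' u := by rw [integral_const]
    rw [← FTCφ, e1, ← intervalIntegral.integral_sub intervalIntegrable_const intφ'']
    have := intervalIntegral.norm_integral_le_of_norm_le_const
      (f := fun s => φ' u - φ' s) (C := M₂ * h) (a := a) (b := b) ?_
    · calc ‖∫ s in a..b, (φ' u - φ' s)‖ ≤ M₂ * h * |b - a| := this
        _ = M₂ * h * h := by rw [abs_of_pos hh]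
    · intro s hs
      have hs' : s ∈ Set.Icc a b := hIoc hs
      calc ‖φ' u - φ' s‖ ≤ M₂ * |u - s| := lipφ' s hs' u hu
        _ ≤ M₂ * h := mul_le_mul_of_nonneg_left (hdist s hs' u hu) hM₂0
  set c : ℝ := (ψ b - ψ a) / h with hc_def
  have hc1 : ∀ u ∈ Set.Icc a b, |ψ' u - c| ≤ K₂ * h := by
    intro u hu
    have e : ψ' u - c = (ψ' u * h - (ψ b - ψ a)) / h := by
      rw [hc_def]; field_simp
    rw [e, abs_div, abs_of_pos hh, div_le_iff₀ hh]
    exact B1 u hu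
  have hcK₁ : |c| ≤ K₁ := by
    rw [hc_def, abs_div, abs_of_pos hh, div_le_iff₀ hh]
    calc |ψ b - ψ a| ≤ K₁ * |b - a| := lipψ a haI b ⟨hba, le_refl b⟩
      _ = K₁ * h := by rw [abs_of_pos hh]
  -- bound on g
  have hg : ∀ u ∈ Set.Icc a b, ‖φ u - φ a - ((u - a) / h) • (φ b - φ a)‖ ≤ M₂ * h * h := by
    intro u hu
    set G : ℝ → E := fun x => φ x - ((x - a) / h) • (φ b - φ a) with hG_def
    have hGd : ∀ x ∈ Set.Icc a b, HasDerivAt G (φ' x - (1 / h) • (φ b - φ a)) x := by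
      intro x hx
      exact (hφ x hx).sub ((((hasDerivAt_id x).sub_const a).div_const h).smul_const (φ b - φ a))
    have hGbound : ∀ x ∈ Set.Icc a b, ‖φ' x - (1 / h) • (φ b - φ a)‖ ≤ M₂ * h := by
      intro x hx
      have e : h • (φ' x - (1 / h) • (φ b - φ a)) = h • φ' x - (φ b - φ a) := by
        rw [smul_sub, smul_smul, mul_one_div, div_self hh.ne', one_smul]
      have : h * ‖φ' x - (1 / h) • (φ b - φ a)‖ ≤ M₂ * h * h := by
        calc h * ‖φ' x - (1 / h) • (φ b - φ a)‖
            = ‖h • (φ' x - (1 / h) • (φ b - φ a))‖ := by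
              rw [norm_smul, Real.norm_eq_abs, abs_of_pos hh]
          _ = ‖h • φ' x - (φ b - φ a)‖ := by rw [e]
          _ ≤ M₂ * h * h := B2 x hx
      nlinarith [hh]
    have := (convex_Icc a b).norm_image_sub_le_of_norm_hasDerivWithin_le
      (fun x hx => (hGd x hx).hasDerivWithinAt) hGbound haI hu
    have hGa : G a = φ a := by simp [hG_def]
    have hGu : G u - G a = φ u - φ a - ((u - a) / h) • (φ b - φ a) := by
      rw [hGa, hG_def]; exact sub_right_comm _ _ _
    rw [← hGu]
    calc ‖G u - G a‖ ≤ M₂ * h * ‖u - a‖ := this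
      _ ≤ M₂ * h * h := by
          apply mul_le_mul_of_nonneg_left _ (by positivity)
          rw [Real.norm_eq_abs]
          exact hdist a haI u hu
  -- more integrability
  have cφsub : ContinuousOn (fun u => φ u - φ a) (Set.Icc a b) := cφ.sub continuousOn_const
  have int_f6 : IntervalIntegrable (fun u => (ψ' u - c) • (φ u - φ a)) MeasureTheory.volume a b :=
    ContinuousOn.intervalIntegrable_of_Icc hba ((cψ'.sub continuousOn_const).smul cφsub)
  have int_f3 : IntervalIntegrable (fun u => φ u - φ a) MeasureTheory.volume a b :=
    ContinuousOn.intervalIntegrable_of_Icc hba cφsub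
  have int_f5 : IntervalIntegrable (fun u => ((u - a) / h) • (φ b - φ a)) MeasureTheory.volume a b :=
    (Continuous.intervalIntegrable ((((continuous_id.sub continuous_const).div_const h).smul continuous_const)) a b)
  have int_g : IntervalIntegrable (fun u => φ u - φ a - ((u - a) / h) • (φ b - φ a)) MeasureTheory.volume a b :=
    int_f3.sub int_f5
  have int_f1 : IntervalIntegrable (fun u => ψ' u • φ u) MeasureTheory.volume a b :=
    ContinuousOn.intervalIntegrable_of_Icc hba (cψ'.smul cφ)
  have int_f2 : IntervalIntegrable (fun u => ψ' u • φ a) MeasureTheory.volume a b :=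
    ContinuousOn.intervalIntegrable_of_Icc hba (cψ'.smul continuousOn_const)
  have int_psiphisub : IntervalIntegrable (fun u => ψ' u • (φ u - φ a)) MeasureTheory.volume a b :=
    ContinuousOn.intervalIntegrable_of_Icc hba (cψ'.smul cφsub)
  -- E1
  set J : E := ∫ u in a..b, (φ u - φ a) with hJ_def
  have E1 : (∫ u in a..b, (ψ' u - c) • (φ u - φ a))
      = (∫ u in a..b, ψ' u • φ u) - (ψ b - ψ a) • φ a - c • J := by
    have int_c3 : IntervalIntegrable (fun u => c • (φ u - φ a)) MeasureTheory.volume a b :=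
      ContinuousOn.intervalIntegrable_of_Icc hba (cφsub.const_smul c)
    have s1 : (∫ u in a..b, (ψ' u - c) • (φ u - φ a))
        = (∫ u in a..b, ψ' u • (φ u - φ a)) - (∫ u in a..b, c • (φ u - φ a)) := by
      have e : (fun u => (ψ' u - c) • (φ u - φ a))
          = fun u => ψ' u • (φ u - φ a) - c • (φ u - φ a) := by
        funext u; rw [sub_smul]
      rw [e, intervalIntegral.integral_sub int_psiphisub int_c3]
    have s2 : (∫ u in a..b, c • (φ u - φ a)) = c • J := intervalIntegral.integral_smul c _
    have s3 : (∫ u in a..b, ψ' u • (φ u - φ a))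
        = (∫ u in a..b, ψ' u • φ u) - (ψ b - ψ a) • φ a := by
      have : (∫ u in a..b, ψ' u • (φ u - φ a))
          = (∫ u in a..b, ψ' u • φ u) - (∫ u in a..b, ψ' u • φ a) := by
        have e : (fun u => ψ' u • (φ u - φ a)) = fun u => ψ' u • φ u - ψ' u • φ a := by
          funext u; rw [smul_sub]
        rw [e, intervalIntegral.integral_sub int_f1 int_f2]
      rw [this, intervalIntegral.integral_smul_const, FTCψ]
    rw [s1, s2, s3]
  -- E2
  have E2 : (∫ u in a..b, (φ u - φ a - ((u - a) / h) • (φ b - φ a)))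
      = J - (h / 2) • (φ b - φ a) := by
    rw [intervalIntegral.integral_sub int_f3 int_f5, intervalIntegral.integral_smul_const]
    congr 2
    have : (∫ u in a..b, (u - a) / h) = (∫ u in a..b, (u - a)) / h := by
      simp [integral_div]
    rw [this]
    have : (∫ u in a..b, (u - a)) = h ^ 2 / 2 := by
      rw [intervalIntegral.integral_sub intervalIntegrable_id intervalIntegrable_const]
      simp [integral_id, integral_const, smul_eq_mul, hh_def]
      ring
    rw [this]
    field_simp
  -- key identity
  have hc2 : c * (h / 2) = (ψ b - ψ a) / 2 := by
    rw [hc_def]; field_simp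
  have key : (∫ u in a..b, ψ' u • φ u)
      - ((ψ b - ψ a) • φ a + (((ψ b - ψ a) + κ * (b - a) ^ 2) / 2) • (φ b - φ a))
      = (∫ u in a..b, (ψ' u - c) • (φ u - φ a))
        + c • (∫ u in a..b, (φ u - φ a - ((u - a) / h) • (φ b - φ a)))
        - ((κ * h ^ 2) / 2) • (φ b - φ a) := by
    rw [E1, E2, smul_sub c J ((h / 2) • (φ b - φ a)), smul_smul c (h / 2) (φ b - φ a), hc2,
      ← hh_def]
    have hcoef : ((ψ b - ψ a) + κ * h ^ 2) / 2 = (ψ b - ψ a) / 2 + (κ * h ^ 2) / 2 := by ring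
    rw [hcoef, add_smul ((ψ b - ψ a) / 2) ((κ * h ^ 2) / 2) (φ b - φ a)]
    abel_nf
  rw [key]
  -- bound the three pieces
  have hR1 : ‖∫ u in a..b, (ψ' u - c) • (φ u - φ a)‖ ≤ (K₂ * h) * (M₁ * h) * h := by
    have := intervalIntegral.norm_integral_le_of_norm_le_const
      (f := fun u => (ψ' u - c) • (φ u - φ a)) (C := (K₂ * h) * (M₁ * h)) (a := a) (b := b) ?_
    · calc ‖∫ u in a..b, (ψ' u - c) • (φ u - φ a)‖ ≤ (K₂ * h) * (M₁ * h) * |b - a| := this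
        _ = (K₂ * h) * (M₁ * h) * h := by rw [abs_of_pos hh]
    · intro u hu
      have hu' : u ∈ Set.Icc a b := hIoc hu
      rw [norm_smul, Real.norm_eq_abs]
      apply mul_le_mul (hc1 u hu') _ (norm_nonneg _) (by positivity)
      calc ‖φ u - φ a‖ ≤ M₁ * |u - a| := lipφ a haI u hu'
        _ ≤ M₁ * h := mul_le_mul_of_nonneg_left (hdist a haI u hu') hM₁0
  have hR2 : ‖∫ u in a..b, (φ u - φ a - ((u - a) / h) • (φ b - φ a))‖ ≤ (M₂ * h * h) * h := by
    have := intervalIntegral.norm_integral_le_of_norm_le_const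
      (f := fun u => φ u - φ a - ((u - a) / h) • (φ b - φ a)) (C := M₂ * h * h) (a := a) (b := b)
      (fun u hu => hg u (hIoc hu))
    calc ‖∫ u in a..b, (φ u - φ a - ((u - a) / h) • (φ b - φ a))‖ ≤ M₂ * h * h * |b - a| := this
      _ = (M₂ * h * h) * h := by rw [abs_of_pos hh]
  have hΔφ : ‖φ b - φ a‖ ≤ M₁ * h := by
    calc ‖φ b - φ a‖ ≤ M₁ * |b - a| := lipφ a haI b ⟨hba, le_refl b⟩
      _ = M₁ * h := by rw [abs_of_pos hh]
  have hR3 : ‖((κ * h ^ 2) / 2) • (φ b - φ a)‖ ≤ (|κ| * h ^ 2 / 2) * (M₁ * h) := by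
    rw [norm_smul, Real.norm_eq_abs]
    apply mul_le_mul _ hΔφ (norm_nonneg _) (by positivity)
    rw [abs_div, abs_mul, abs_of_pos (by positivity : (0:ℝ) < h ^ 2)]
    simp
  calc ‖(∫ u in a..b, (ψ' u - c) • (φ u - φ a))
        + c • (∫ u in a..b, (φ u - φ a - ((u - a) / h) • (φ b - φ a)))
        - ((κ * h ^ 2) / 2) • (φ b - φ a)‖
      ≤ ‖(∫ u in a..b, (ψ' u - c) • (φ u - φ a))
        + c • (∫ u in a..b, (φ u - φ a - ((u - a) / h) • (φ b - φ a)))‖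
        + ‖((κ * h ^ 2) / 2) • (φ b - φ a)‖ := norm_sub_le _ _
    _ ≤ ‖(∫ u in a..b, (ψ' u - c) • (φ u - φ a))‖
        + ‖c • (∫ u in a..b, (φ u - φ a - ((u - a) / h) • (φ b - φ a)))‖
        + ‖((κ * h ^ 2) / 2) • (φ b - φ a)‖ := by
          gcongr
          exact norm_add_le _ _
    _ ≤ (K₂ * h) * (M₁ * h) * h + K₁ * ((M₂ * h * h) * h) + (|κ| * h ^ 2 / 2) * (M₁ * h) := by
          have hcR2 : ‖c • (∫ u in a..b, (φ u - φ a - ((u - a) / h) • (φ b - φ a)))‖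
              ≤ K₁ * ((M₂ * h * h) * h) := by
            rw [norm_smul, Real.norm_eq_abs]
            exact mul_le_mul hcK₁ hR2 (norm_nonneg _) hK₁0
          exact add_le_add (add_le_add hR1 hcR2) hR3
    _ ≤ (M₁ * K₂ + K₁ * M₂ + |κ| * M₁) * h ^ 3 := by
          clear_value c J
          clear_value h
          nlinarith [mul_nonneg (mul_nonneg (abs_nonneg κ) hM₁0) (pow_nonneg hh.le 3), hh.le]




/-- Local truncation error of the second-order corrector of Dual-Solver. -/
theorem dual_solver_second_order_corrector_lte
    {E : Type*} [NormedAddCommGroup E] [NormedSpace ℝ E] [CompleteSpace E]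
    (a_u b_u a_v b_v : ℝ) (hab_u : a_u < b_u) (hab_v : a_v < b_v)
    (ψu ψu' ψu'' ψv ψv' ψv'' : ℝ → ℝ) (φ φ' φ'' ε ε' ε'' : ℝ → E)
    (K₁u K₂u K₁v K₂v M₁u M₂u M₁v M₂v : ℝ)
    (hψu : ∀ u ∈ Set.Icc a_u b_u, HasDerivAt ψu (ψu' u) u)
    (hψu' : ∀ u ∈ Set.Icc a_u b_u, HasDerivAt ψu' (ψu'' u) u)
    (hK₁u : ∀ u ∈ Set.Icc a_u b_u, |ψu' u| ≤ K₁u)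
    (hK₂u : ∀ u ∈ Set.Icc a_u b_u, |ψu'' u| ≤ K₂u)
    (hψv : ∀ v ∈ Set.Icc a_v b_v, HasDerivAt ψv (ψv' v) v)
    (hψv' : ∀ v ∈ Set.Icc a_v b_v, HasDerivAt ψv' (ψv'' v) v)
    (hK₁v : ∀ v ∈ Set.Icc a_v b_v, |ψv' v| ≤ K₁v)
    (hK₂v : ∀ v ∈ Set.Icc a_v b_v, |ψv'' v| ≤ K₂v)
    (hφ : ∀ u ∈ Set.Icc a_u b_u, HasDerivAt φ (φ' u) u)
    (hφ' : ∀ u ∈ Set.Icc a_u b_u, HasDerivAt φ' (φ'' u) u)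
    (hM₁u : ∀ u ∈ Set.Icc a_u b_u, ‖φ' u‖ ≤ M₁u)
    (hM₂u : ∀ u ∈ Set.Icc a_u b_u, ‖φ'' u‖ ≤ M₂u)
    (hε : ∀ v ∈ Set.Icc a_v b_v, HasDerivAt ε (ε' v) v)
    (hε' : ∀ v ∈ Set.Icc a_v b_v, HasDerivAt ε' (ε'' v) v)
    (hM₁v : ∀ v ∈ Set.Icc a_v b_v, ‖ε' v‖ ≤ M₁v)
    (hM₂v : ∀ v ∈ Set.Icc a_v b_v, ‖ε'' v‖ ≤ M₂v)
    (A B κu κv : ℝ) (x_i : E) :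
    ‖(A • x_i + B • ((∫ u in a_u..b_u, ψu' u • φ u) + ∫ v in a_v..b_v, ψv' v • ε v))
      - (A • x_i + B • ((ψu b_u - ψu a_u) • φ a_u
          + (((ψu b_u - ψu a_u) + κu * (b_u - a_u) ^ 2) / 2) • (φ b_u - φ a_u)
          + (ψv b_v - ψv a_v) • ε a_v
          + (((ψv b_v - ψv a_v) + κv * (b_v - a_v) ^ 2) / 2) • (ε b_v - ε a_v)))‖
    ≤ |B| * ((M₁u * K₂u + K₁u * M₂u + |κu| * M₁u) * (b_u - a_u) ^ 3
        + (M₁v * K₂v + K₁v * M₂v + |κv| * M₁v) * (b_v - a_v) ^ 3) := by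
  have hu := dual_solver_single_interval_bound a_u b_u hab_u ψu ψu' ψu'' φ φ' φ'' K₁u K₂u M₁u M₂u κu
    hψu hψu' hK₁u hK₂u hφ hφ' hM₁u hM₂u
  have hv := dual_solver_single_interval_bound a_v b_v hab_v ψv ψv' ψv'' ε ε' ε'' K₁v K₂v M₁v M₂v κv
    hψv hψv' hK₁v hK₂v hε hε' hM₁v hM₂v
  have heq : (A • x_i + B • ((∫ u in a_u..b_u, ψu' u • φ u) + ∫ v in a_v..b_v, ψv' v • ε v))
      - (A • x_i + B • ((ψu b_u - ψu a_u) • φ a_u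
          + (((ψu b_u - ψu a_u) + κu * (b_u - a_u) ^ 2) / 2) • (φ b_u - φ a_u)
          + (ψv b_v - ψv a_v) • ε a_v
          + (((ψv b_v - ψv a_v) + κv * (b_v - a_v) ^ 2) / 2) • (ε b_v - ε a_v)))
      = B • (((∫ u in a_u..b_u, ψu' u • φ u)
            - ((ψu b_u - ψu a_u) • φ a_u
              + (((ψu b_u - ψu a_u) + κu * (b_u - a_u) ^ 2) / 2) • (φ b_u - φ a_u)))
          + ((∫ v in a_v..b_v, ψv' v • ε v)
            - ((ψv b_v - ψv a_v) • ε a_v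
              + (((ψv b_v - ψv a_v) + κv * (b_v - a_v) ^ 2) / 2) • (ε b_v - ε a_v)))) := by
    module
  rw [heq, norm_smul, Real.norm_eq_abs]
  exact mul_le_mul_of_nonneg_left ((norm_add_le _ _).trans (add_le_add hu hv)) (abs_nonneg B)
end

section
/- Let E be a real Banach space, a < b real numbers, ψ : ℝ → ℝ twice differentiable on [a, b] with |ψ'(u)| ≤ K₁ and |ψ''(u)| ≤ K₂ on [a, b], and φ : ℝ → E twice differentiable on [a, b] with ‖φ'(u)‖ ≤ M₁ and ‖φ''(u)‖ ≤ M₂ on [a, b]. Write Δψ = ψ(b) − ψ(a) and Δφ = φ(b) − φ(a). Then ‖∫_a^b ψ'(u)•φ(u) du − Δψ•φ(a) − (Δψ/2)•Δφ‖ ≤ ((M₁K₂ + K₁M₂)/2)(b − a)³. -/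
open intervalIntegral Set MeasureTheory

/-- First-order Taylor-type bound: if `f''` is bounded by `M` on `[a,b]`, then
`‖f t - f a - (t-a) • f' t‖ ≤ M * (b-a) * (b-a)` for `t ∈ [a,b]`. -/
lemma taylor1_bound_aux {F : Type*} [NormedAddCommGroup F] [NormedSpace ℝ F]
    (a b : ℝ) (f f' f'' : ℝ → F) (M : ℝ)
    (hf : ∀ u ∈ Set.Icc a b, HasDerivAt f (f' u) u)
    (hf' : ∀ u ∈ Set.Icc a b, HasDerivAt f' (f'' u) u)
    (hM : ∀ u ∈ Set.Icc a b, ‖f'' u‖ ≤ M) :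
    ∀ t ∈ Set.Icc a b, ‖f t - f a - (t - a) • f' t‖ ≤ M * (b - a) * (b - a) := by
  intro t ht
  have hM0 : 0 ≤ M := le_trans (norm_nonneg _) (hM t ht)
  -- Lipschitz bound for f'
  have hlip : ∀ s ∈ Set.Icc a b, ‖f' s - f' t‖ ≤ M * (b - a) := by
    intro s hs
    have h1 : ‖f' s - f' t‖ ≤ M * ‖s - t‖ :=
      (convex_Icc a b).norm_image_sub_le_of_norm_hasDerivWithin_le
        (fun x hx => (hf' x hx).hasDerivWithinAt) hM ht hs
    refine h1.trans ?_
    apply mul_le_mul_of_nonneg_left _ hM0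
    rw [Real.norm_eq_abs, abs_sub_le_iff]
    constructor <;> linarith [hs.1, hs.2, ht.1, ht.2]
  -- MVT for h s = f s - s • f' t
  have hDer : ∀ s ∈ Set.Icc a b,
      HasDerivWithinAt (fun s => f s - s • f' t) (f' s - f' t) (Set.Icc a b) s := by
    intro s hs
    have h1 : HasDerivAt (fun s : ℝ => s • f' t) ((1 : ℝ) • f' t) s :=
      (hasDerivAt_id s).smul_const (f' t)
    rw [one_smul] at h1
    exact ((hf s hs).sub h1).hasDerivWithinAt
  have key : ‖(f t - t • f' t) - (f a - a • f' t)‖ ≤ M * (b - a) * ‖t - a‖ :=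
    (convex_Icc a b).norm_image_sub_le_of_norm_hasDerivWithin_le hDer hlip
      (Set.left_mem_Icc.2 (ht.1.trans ht.2)) ht
  have heq : (f t - t • f' t) - (f a - a • f' t) = f t - f a - (t - a) • f' t := by
    rw [sub_smul]; abel
  rw [heq] at key
  refine key.trans ?_
  have habl : a ≤ b := ht.1.trans ht.2
  apply mul_le_mul_of_nonneg_left _ (mul_nonneg hM0 (by linarith))
  rw [Real.norm_eq_abs, abs_sub_le_iff]
  constructor <;> linarith [ht.1, ht.2]

/-- Key expansion in the second-order corrector's local truncation error:
the weighted integral equals the forward-difference approximation up to an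
O((b-a)³) error. -/
theorem weighted_integral_forward_difference_expansion
    {E : Type*} [NormedAddCommGroup E] [NormedSpace ℝ E] [CompleteSpace E]
    (a b : ℝ) (hab : a < b)
    (ψ ψ' ψ'' : ℝ → ℝ) (φ φ' φ'' : ℝ → E) (K₁ K₂ M₁ M₂ : ℝ)
    (hψ : ∀ u ∈ Set.Icc a b, HasDerivAt ψ (ψ' u) u)
    (hψ' : ∀ u ∈ Set.Icc a b, HasDerivAt ψ' (ψ'' u) u)
    (hK₁ : ∀ u ∈ Set.Icc a b, |ψ' u| ≤ K₁)
    (hK₂ : ∀ u ∈ Set.Icc a b, |ψ'' u| ≤ K₂)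
    (hφ : ∀ u ∈ Set.Icc a b, HasDerivAt φ (φ' u) u)
    (hφ' : ∀ u ∈ Set.Icc a b, HasDerivAt φ' (φ'' u) u)
    (hM₁ : ∀ u ∈ Set.Icc a b, ‖φ' u‖ ≤ M₁)
    (hM₂ : ∀ u ∈ Set.Icc a b, ‖φ'' u‖ ≤ M₂) :
    ‖(∫ u in a..b, ψ' u • φ u) - (ψ b - ψ a) • φ a
        - ((ψ b - ψ a) / 2) • (φ b - φ a)‖
      ≤ (M₁ * K₂ + K₁ * M₂) / 2 * (b - a) ^ 3 := by
  have hab' : a ≤ b := hab.le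
  have haM : a ∈ Set.Icc a b := Set.left_mem_Icc.2 hab'
  have hK₁0 : 0 ≤ K₁ := le_trans (abs_nonneg _) (hK₁ a haM)
  have hM₁0 : 0 ≤ M₁ := le_trans (norm_nonneg _) (hM₁ a haM)
  have huIcc : Set.uIcc a b = Set.Icc a b := Set.uIcc_of_le hab'
  -- continuity
  have hcψ : ContinuousOn ψ (Set.Icc a b) :=
    fun u hu => (hψ u hu).continuousAt.continuousWithinAt
  have hcψ' : ContinuousOn ψ' (Set.Icc a b) :=
    fun u hu => (hψ' u hu).continuousAt.continuousWithinAt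
  have hcφ : ContinuousOn φ (Set.Icc a b) :=
    fun u hu => (hφ u hu).continuousAt.continuousWithinAt
  have hcφ' : ContinuousOn φ' (Set.Icc a b) :=
    fun u hu => (hφ' u hu).continuousAt.continuousWithinAt
  -- integrability
  have hint1 : IntervalIntegrable (fun t => ψ' t • φ t) volume a b := by
    apply ContinuousOn.intervalIntegrable; rw [huIcc]; exact hcψ'.smul hcφ
  have hint2 : IntervalIntegrable (fun t => ψ t • φ' t) volume a b := by
    apply ContinuousOn.intervalIntegrable; rw [huIcc]; exact hcψ.smul hcφ'
  have hintA : IntervalIntegrable (fun t => ψ' t • φ a) volume a b := by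
    apply ContinuousOn.intervalIntegrable; rw [huIcc]; exact hcψ'.smul continuousOn_const
  have hintB : IntervalIntegrable (fun t => ψ a • φ' t) volume a b := by
    apply ContinuousOn.intervalIntegrable; rw [huIcc]
    exact continuousOn_const.smul hcφ'
  have hintψ' : IntervalIntegrable ψ' volume a b := by
    apply ContinuousOn.intervalIntegrable; rw [huIcc]; exact hcψ'
  have hintφ' : IntervalIntegrable φ' volume a b := by
    apply ContinuousOn.intervalIntegrable; rw [huIcc]; exact hcφ'
  -- basic FTC facts
  have hIψ' : (∫ t in a..b, ψ' t) = ψ b - ψ a :=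
    integral_eq_sub_of_hasDerivAt (fun t ht => hψ t (huIcc ▸ ht)) hintψ'
  have hIφ' : (∫ t in a..b, φ' t) = φ b - φ a :=
    integral_eq_sub_of_hasDerivAt (fun t ht => hφ t (huIcc ▸ ht)) hintφ'
  -- integration by parts
  have hparts : (∫ t in a..b, (ψ' t • φ t + ψ t • φ' t)) = ψ b • φ b - ψ a • φ a := by
    apply integral_eq_sub_of_hasDerivAt (f := fun t => ψ t • φ t)
    · intro t ht
      rw [huIcc] at ht
      have := (hψ t ht).smul (hφ t ht)
      convert this using 1
      · rfl
      · rw [add_comm]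
    · exact hint1.add hint2
  set I : E := ∫ t in a..b, ψ' t • φ t with hI
  have hJ : (∫ t in a..b, ψ t • φ' t) = (ψ b • φ b - ψ a • φ a) - I := by
    rw [integral_add hint1 hint2] at hparts
    exact eq_sub_of_add_eq' hparts
  -- the error equals the integral of g
  have hDeq : I - (ψ b - ψ a) • φ a - ((ψ b - ψ a) / 2) • (φ b - φ a)
      = ∫ t in a..b, (2⁻¹ : ℝ) • (ψ' t • (φ t - φ a) - (ψ t - ψ a) • φ' t) := by
    rw [intervalIntegral.integral_smul]
    have expand : (fun t => ψ' t • (φ t - φ a) - (ψ t - ψ a) • φ' t)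
        = fun t => (ψ' t • φ t - ψ' t • φ a) - (ψ t • φ' t - ψ a • φ' t) := by
      funext t; rw [smul_sub, sub_smul]
    rw [expand, integral_sub (hint1.sub hintA) (hint2.sub hintB),
      integral_sub hint1 hintA, integral_sub hint2 hintB,
      intervalIntegral.integral_smul_const, hIψ', intervalIntegral.integral_smul, hIφ', hJ, ← hI]
    module
  rw [hDeq]
  -- pointwise bound on g
  have hTφ := taylor1_bound_aux a b φ φ' φ'' M₂ hφ hφ' hM₂
  have hTψ := taylor1_bound_aux a b ψ ψ' ψ'' K₂ hψ hψ' (fun u hu => hK₂ u hu)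
  have hgbound : ∀ t ∈ Set.Icc a b,
      ‖(2⁻¹ : ℝ) • (ψ' t • (φ t - φ a) - (ψ t - ψ a) • φ' t)‖
        ≤ (M₁ * K₂ + K₁ * M₂) / 2 * (b - a) ^ 2 := by
    intro t ht
    have hrw : ψ' t • (φ t - φ a) - (ψ t - ψ a) • φ' t
        = ψ' t • (φ t - φ a - (t - a) • φ' t)
          - (ψ t - ψ a - (t - a) * ψ' t) • φ' t := by
      module
    rw [hrw, norm_smul]
    have h1 : ‖ψ' t • (φ t - φ a - (t - a) • φ' t)‖ ≤ K₁ * (M₂ * (b - a) * (b - a)) := by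
      rw [norm_smul, Real.norm_eq_abs]
      exact mul_le_mul (hK₁ t ht) (hTφ t ht) (norm_nonneg _) hK₁0
    have hK₂0 : 0 ≤ K₂ := le_trans (abs_nonneg _) (hK₂ a haM)
    have h2 : ‖(ψ t - ψ a - (t - a) * ψ' t) • φ' t‖ ≤ K₂ * (b - a) * (b - a) * M₁ := by
      rw [norm_smul, Real.norm_eq_abs]
      have h2a := hTψ t ht
      rw [Real.norm_eq_abs, smul_eq_mul] at h2a
      exact mul_le_mul h2a (hM₁ t ht) (norm_nonneg _)
        (mul_nonneg (mul_nonneg hK₂0 (by linarith)) (by linarith))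
    have h3 : ‖ψ' t • (φ t - φ a - (t - a) • φ' t) - (ψ t - ψ a - (t - a) * ψ' t) • φ' t‖
        ≤ K₁ * (M₂ * (b - a) * (b - a)) + K₂ * (b - a) * (b - a) * M₁ :=
      (norm_sub_le _ _).trans (add_le_add h1 h2)
    calc ‖(2⁻¹ : ℝ)‖ * ‖ψ' t • (φ t - φ a - (t - a) • φ' t)
            - (ψ t - ψ a - (t - a) * ψ' t) • φ' t‖
        ≤ 2⁻¹ * (K₁ * (M₂ * (b - a) * (b - a)) + K₂ * (b - a) * (b - a) * M₁) := by
          rw [norm_inv, Real.norm_ofNat]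
          exact mul_le_mul_of_nonneg_left h3 (by norm_num)
      _ = (M₁ * K₂ + K₁ * M₂) / 2 * (b - a) ^ 2 := by ring
  -- integrate the bound
  have hfinal := intervalIntegral.norm_integral_le_of_norm_le_const
    (C := (M₁ * K₂ + K₁ * M₂) / 2 * (b - a) ^ 2)
    (f := fun t => (2⁻¹ : ℝ) • (ψ' t • (φ t - φ a) - (ψ t - ψ a) • φ' t))
    (a := a) (b := b)
    (fun x hx => hgbound x (Set.mem_Icc_of_Ioc (Set.uIoc_of_le hab' ▸ hx)))
  refine hfinal.trans (le_of_eq ?_)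
  rw [abs_of_nonneg (by linarith)]
  ring
end

section
/- Let E be a real Banach space, t₀ < t₁ real numbers, γ ≥ 0 a real number, and α, σ : ℝ → ℝ continuously differentiable and strictly positive on [t₀, t₁]. Let ε̂ : ℝ → E be continuous on [t₀, t₁] and let x : ℝ → E be differentiable on [t₀, t₁] with x'(t) = (α'(t)/α(t))•x(t) + (σ'(t) − (α'(t)/α(t))σ(t))•ε̂(t) for all t ∈ [t₀, t₁]. Define x̂(t) = (1/α(t))•(x(t) − σ(t)•ε̂(t)). Then x(t₁) = (σ(t₁)/σ(t₀))^γ • x(t₀) + σ(t₁)^γ • ( ∫_{t₀}^{t₁} (α'(t)σ(t)^{−γ} − γ α(t) σ(t)^{−γ−1} σ'(t)) • x̂(t) dt + ∫_{t₀}^{t₁} (1 − γ) σ(t)^{−γ} σ'(t) • ε̂(t) dt ), i.e. the exact solution of the probability-flow ODE satisfies the dual-prediction integral form with coefficients A = (σ(t₁)/σ(t₀))^γ, B = σ(t₁)^γ, C = d/dt(α σ^{−γ}), D = d/dt(σ^{1−γ}). -/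
/-- Integral form of dual prediction for γ ≥ 0: the exact solution of the
probability-flow ODE satisfies the dual-prediction integral form with
A = (σ(t₁)/σ(t₀))^γ, B = σ(t₁)^γ, C = d/dt(α σ^{-γ}), D = d/dt(σ^{1-γ}). -/
theorem dual_prediction_integral_form_nonneg
    {E : Type*} [NormedAddCommGroup E] [NormedSpace ℝ E] [CompleteSpace E]
    (t₀ t₁ : ℝ) (ht : t₀ < t₁) (γ : ℝ) (hγ : 0 ≤ γ)
    (α α' σ σ' : ℝ → ℝ) (εh x : ℝ → E)
    (hα : ∀ t ∈ Set.Icc t₀ t₁, HasDerivAt α (α' t) t)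
    (hα' : ContinuousOn α' (Set.Icc t₀ t₁))
    (hσ : ∀ t ∈ Set.Icc t₀ t₁, HasDerivAt σ (σ' t) t)
    (hσ' : ContinuousOn σ' (Set.Icc t₀ t₁))
    (hαpos : ∀ t ∈ Set.Icc t₀ t₁, 0 < α t)
    (hσpos : ∀ t ∈ Set.Icc t₀ t₁, 0 < σ t)
    (hεh : ContinuousOn εh (Set.Icc t₀ t₁))
    (hx : ∀ t ∈ Set.Icc t₀ t₁,
      HasDerivAt x ((α' t / α t) • x t + (σ' t - (α' t / α t) * σ t) • εh t) t) :
    x t₁ = ((σ t₁ / σ t₀) ^ γ) • x t₀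
        + (σ t₁ ^ γ) •
          ((∫ t in t₀..t₁,
              (α' t * σ t ^ (-γ) - γ * α t * σ t ^ (-γ - 1) * σ' t) •
                ((1 / α t) • (x t - σ t • εh t)))
            + ∫ t in t₀..t₁, ((1 - γ) * σ t ^ (-γ) * σ' t) • εh t) := by
  set I := Set.Icc t₀ t₁ with hI
  have ht0 : t₀ ∈ I := Set.left_mem_Icc.2 ht.le
  have ht1 : t₁ ∈ I := Set.right_mem_Icc.2 ht.le
  set f : ℝ → E := fun t =>
    (α' t * σ t ^ (-γ) - γ * α t * σ t ^ (-γ - 1) * σ' t) •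
      ((1 / α t) • (x t - σ t • εh t)) with hf
  set g : ℝ → E := fun t => ((1 - γ) * σ t ^ (-γ) * σ' t) • εh t with hg
  -- derivative of y t = σ t ^ (-γ) • x t
  have key : ∀ t ∈ I, HasDerivAt (fun t => (σ t ^ (-γ)) • x t) (f t + g t) t := by
    intro t htI
    have hσne : σ t ≠ 0 := (hσpos t htI).ne'
    have hαne : α t ≠ 0 := (hαpos t htI).ne'
    have h1 : HasDerivAt (fun t => σ t ^ (-γ)) (σ' t * (-γ) * σ t ^ (-γ - 1)) t :=
      (hσ t htI).rpow_const (Or.inl hσne)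
    have h2 := h1.smul (hx t htI)
    convert h2 using 1
    · rfl
    have e1 : σ t ^ (-γ - 1) = σ t ^ (-γ) / σ t := by
      rw [Real.rpow_sub (hσpos t htI), Real.rpow_one]
    simp only [hf, hg, e1]
    match_scalars <;> field_simp <;> ring
  have hxc : ContinuousOn x I := fun t htI => ((hx t htI).continuousAt).continuousWithinAt
  have hσc : ContinuousOn σ I := fun t htI => ((hσ t htI).continuousAt).continuousWithinAt
  have hαc : ContinuousOn α I := fun t htI => ((hα t htI).continuousAt).continuousWithinAt
  have hσr : ContinuousOn (fun t => σ t ^ (-γ)) I :=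
    hσc.rpow_const (fun t htI => Or.inl (hσpos t htI).ne')
  have hσr1 : ContinuousOn (fun t => σ t ^ (-γ - 1)) I :=
    hσc.rpow_const (fun t htI => Or.inl (hσpos t htI).ne')
  have hfc : ContinuousOn f I := by
    apply ContinuousOn.smul
    · exact (hα'.mul hσr).sub (((continuousOn_const.mul hαc).mul hσr1).mul hσ')
    · exact (continuousOn_const.div hαc (fun t htI => (hαpos t htI).ne')).smul
        (hxc.sub (hσc.smul hεh))
  have hgc : ContinuousOn g I := ((continuousOn_const.mul hσr).mul hσ').smul hεh
  have huIcc : Set.uIcc t₀ t₁ = I := Set.uIcc_of_le ht.le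
  have hfint : IntervalIntegrable f MeasureTheory.volume t₀ t₁ :=
    (hfc.mono huIcc.subset).intervalIntegrable
  have hgint : IntervalIntegrable g MeasureTheory.volume t₀ t₁ :=
    (hgc.mono huIcc.subset).intervalIntegrable
  have hFTC : ∫ t in t₀..t₁, (f t + g t) =
      (σ t₁ ^ (-γ)) • x t₁ - (σ t₀ ^ (-γ)) • x t₀ := by
    apply intervalIntegral.integral_eq_sub_of_hasDerivAt
    · intro t htI; exact key t (huIcc ▸ htI)
    · exact hfint.add hgint
  rw [intervalIntegral.integral_add hfint hgint] at hFTC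
  have hσ0 : (0:ℝ) < σ t₀ := hσpos t₀ ht0
  have hσ1 : (0:ℝ) < σ t₁ := hσpos t₁ ht1
  have hrec : (σ t₁ ^ γ) * (σ t₁ ^ (-γ)) = 1 := by
    rw [← Real.rpow_add hσ1]; simp
  have hA : (σ t₁ / σ t₀) ^ γ = σ t₁ ^ γ * σ t₀ ^ (-γ) := by
    rw [Real.div_rpow hσ1.le hσ0.le, Real.rpow_neg hσ0.le, div_eq_mul_inv]
  calc x t₁ = (σ t₁ ^ γ) • ((σ t₁ ^ (-γ)) • x t₁) := by
        rw [smul_smul, hrec, one_smul]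
    _ = (σ t₁ ^ γ) • ((σ t₀ ^ (-γ)) • x t₀ + ((∫ t in t₀..t₁, f t) + ∫ t in t₀..t₁, g t)) := by
        congr 1
        have : (σ t₁ ^ (-γ)) • x t₁ =
            (σ t₀ ^ (-γ)) • x t₀ + ((∫ t in t₀..t₁, f t) + ∫ t in t₀..t₁, g t) := by
          rw [hFTC]; abel
        rw [this]
    _ = ((σ t₁ / σ t₀) ^ γ) • x t₀
        + (σ t₁ ^ γ) • ((∫ t in t₀..t₁, f t) + ∫ t in t₀..t₁, g t) := by
        rw [smul_add, hA, smul_smul]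
end

section
/- Let E be a real Banach space, t₀ < t₁ real numbers, γ < 0 a real number, and α, σ : ℝ → ℝ continuously differentiable and strictly positive on [t₀, t₁]. Let ε̂ : ℝ → E be continuous on [t₀, t₁] and let x : ℝ → E be differentiable on [t₀, t₁] with x'(t) = (α'(t)/α(t))•x(t) + (σ'(t) − (α'(t)/α(t))σ(t))•ε̂(t) for all t ∈ [t₀, t₁]. Define x̂(t) = (1/α(t))•(x(t) − σ(t)•ε̂(t)). Then x(t₁) = (α(t₁)/α(t₀))^{−γ} • x(t₀) + α(t₁)^{−γ} • ( ∫_{t₀}^{t₁} (1 + γ) α(t)^{γ} α'(t) • x̂(t) dt + ∫_{t₀}^{t₁} (σ'(t) α(t)^{γ} + γ σ(t) α(t)^{γ−1} α'(t)) • ε̂(t) dt ), i.e. the exact solution of the probability-flow ODE satisfies the dual-prediction integral form with coefficients A = (α(t₁)/α(t₀))^{−γ}, B = α(t₁)^{−γ}, C = d/dt(α^{1+γ}), D = d/dt(σ α^{γ}). -/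
/-- Integral form of dual prediction for γ < 0: the exact solution of the
probability-flow ODE satisfies the dual-prediction integral form with
A = (α(t₁)/α(t₀))^{-γ}, B = α(t₁)^{-γ}, C = d/dt(α^{1+γ}), D = d/dt(σ α^{γ}). -/
theorem dual_prediction_integral_form_neg
    {E : Type*} [NormedAddCommGroup E] [NormedSpace ℝ E] [CompleteSpace E]
    (t₀ t₁ : ℝ) (ht : t₀ < t₁) (γ : ℝ) (hγ : γ < 0)
    (α α' σ σ' : ℝ → ℝ) (εh x : ℝ → E)
    (hα : ∀ t ∈ Set.Icc t₀ t₁, HasDerivAt α (α' t) t)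
    (hα' : ContinuousOn α' (Set.Icc t₀ t₁))
    (hσ : ∀ t ∈ Set.Icc t₀ t₁, HasDerivAt σ (σ' t) t)
    (hσ' : ContinuousOn σ' (Set.Icc t₀ t₁))
    (hαpos : ∀ t ∈ Set.Icc t₀ t₁, 0 < α t)
    (hσpos : ∀ t ∈ Set.Icc t₀ t₁, 0 < σ t)
    (hεh : ContinuousOn εh (Set.Icc t₀ t₁))
    (hx : ∀ t ∈ Set.Icc t₀ t₁,
      HasDerivAt x ((α' t / α t) • x t + (σ' t - (α' t / α t) * σ t) • εh t) t) :
    x t₁ = ((α t₁ / α t₀) ^ (-γ)) • x t₀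
        + (α t₁ ^ (-γ)) •
          ((∫ t in t₀..t₁,
              ((1 + γ) * α t ^ γ * α' t) • ((1 / α t) • (x t - σ t • εh t)))
            + ∫ t in t₀..t₁,
              (σ' t * α t ^ γ + γ * σ t * α t ^ (γ - 1) * α' t) • εh t) := by
  have hI : Set.uIcc t₀ t₁ = Set.Icc t₀ t₁ := Set.uIcc_of_le ht.le
  have ht0 : t₀ ∈ Set.Icc t₀ t₁ := Set.left_mem_Icc.2 ht.le
  have ht1 : t₁ ∈ Set.Icc t₀ t₁ := Set.right_mem_Icc.2 ht.le
  set g₁ : ℝ → E := fun t =>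
    ((1 + γ) * α t ^ γ * α' t) • ((1 / α t) • (x t - σ t • εh t)) with hg₁
  set g₂ : ℝ → E := fun t =>
    (σ' t * α t ^ γ + γ * σ t * α t ^ (γ - 1) * α' t) • εh t with hg₂
  -- basic continuity facts
  have hαc : ContinuousOn α (Set.Icc t₀ t₁) := fun t htI =>
    (hα t htI).continuousAt.continuousWithinAt
  have hσc : ContinuousOn σ (Set.Icc t₀ t₁) := fun t htI =>
    (hσ t htI).continuousAt.continuousWithinAt
  have hxc : ContinuousOn x (Set.Icc t₀ t₁) := fun t htI =>
    (hx t htI).continuousAt.continuousWithinAt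
  have hαne : ∀ t ∈ Set.Icc t₀ t₁, α t ≠ 0 := fun t htI => (hαpos t htI).ne'
  have hrpow : ∀ p : ℝ, ContinuousOn (fun t => α t ^ p) (Set.Icc t₀ t₁) := fun p =>
    hαc.rpow_const (fun t htI => Or.inl (hαne t htI))
  have hg₁c : ContinuousOn g₁ (Set.Icc t₀ t₁) := by
    apply ContinuousOn.smul
    · exact ((continuousOn_const.mul (hrpow γ)).mul hα')
    · exact (continuousOn_const.div hαc hαne).smul (hxc.sub (hσc.smul hεh))
  have hg₂c : ContinuousOn g₂ (Set.Icc t₀ t₁) := by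
    apply ContinuousOn.smul
    · exact (hσ'.mul (hrpow γ)).add
        (((continuousOn_const.mul hσc).mul (hrpow (γ - 1))).mul hα')
    · exact hεh
  -- the derivative of Φ t = α t ^ γ • x t is g₁ t + g₂ t on the interval
  have hΦ : ∀ t ∈ Set.Icc t₀ t₁,
      HasDerivAt (fun t => (α t ^ γ) • x t) (g₁ t + g₂ t) t := by
    intro t htI
    have hαt := hα t htI
    have hpow : HasDerivAt (fun t => α t ^ γ) (γ * α t ^ (γ - 1) * α' t) t := by
      have := hαt.rpow_const (p := γ) (Or.inl (hαne t htI))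
      convert this using 1; ring
    have h := hpow.smul (hx t htI)
    convert h using 1
    · rfl
    have hne : α t ≠ 0 := hαne t htI
    simp only [hg₁, hg₂]
    rw [Real.rpow_sub_one hne]
    generalize α t ^ γ = A
    simp only [smul_smul, smul_sub, smul_add]
    match_scalars <;> field_simp <;> ring
  -- FTC
  have hftc : (∫ t in t₀..t₁, (g₁ t + g₂ t))
      = (α t₁ ^ γ) • x t₁ - (α t₀ ^ γ) • x t₀ := by
    apply intervalIntegral.integral_eq_sub_of_hasDerivAt
    · intro t htI; exact hΦ t (hI ▸ htI)
    · exact ((hg₁c.add hg₂c).mono (le_of_eq hI)).intervalIntegrable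
  have hint₁ : IntervalIntegrable g₁ MeasureTheory.volume t₀ t₁ :=
    (hg₁c.mono (le_of_eq hI)).intervalIntegrable
  have hint₂ : IntervalIntegrable g₂ MeasureTheory.volume t₀ t₁ :=
    (hg₂c.mono (le_of_eq hI)).intervalIntegrable
  have hsum : (∫ t in t₀..t₁, g₁ t) + (∫ t in t₀..t₁, g₂ t)
      = (α t₁ ^ γ) • x t₁ - (α t₀ ^ γ) • x t₀ := by
    rw [← intervalIntegral.integral_add hint₁ hint₂]; exact hftc
  -- algebra to conclude
  have h0 : (0:ℝ) < α t₀ := hαpos t₀ ht0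
  have h1 : (0:ℝ) < α t₁ := hαpos t₁ ht1
  have hdiv : (α t₁ / α t₀) ^ (-γ) = α t₁ ^ (-γ) * α t₀ ^ γ := by
    rw [Real.div_rpow h1.le h0.le, Real.rpow_neg h0.le, div_eq_mul_inv, inv_inv]
  rw [hdiv, hsum]
  rw [smul_sub, smul_smul, ← Real.rpow_add h1, neg_add_cancel,
    Real.rpow_zero, one_smul]
  module
end

section
/- Let E be a real normed vector space, c, s ∈ ℝ, and x, ε ∈ E. Define, for Δ ∈ ℝ, the noise-prediction Euler update N(Δ) = c•(x − (sΔ)•ε) and the data-prediction Euler update D(Δ) = c•(((1 + Δ) exp(−Δ))•x − (exp(−Δ) s Δ)•ε). Then the difference Δ ↦ D(Δ) − N(Δ) is O(Δ²) as Δ → 0; more precisely, D(Δ) − N(Δ) = c•(((1 + Δ)e^{−Δ} − 1)•x + ((1 − e^{−Δ}) s Δ)•ε), and both scalar coefficients (1 + Δ)e^{−Δ} − 1 and (1 − e^{−Δ})Δ are O(Δ²) at Δ = 0. -/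
open Asymptotics Filter Topology

lemma abs__le_one_near : ∀ᶠ Δ : ℝ in 𝓝 0, |Δ| ≤ 1 := by
  have : Metric.closedBall (0:ℝ) 1 ∈ 𝓝 (0:ℝ) := Metric.closedBall_mem_nhds 0 one_pos
  filter_upwards [this] with Δ hΔ using by simpa [Real.dist_eq] using hΔ

lemma coef1_bigO : (fun Δ : ℝ => (1 + Δ) * Real.exp (-Δ) - 1) =O[𝓝 0] fun Δ : ℝ => Δ ^ 2 := by
  rw [isBigO_iff]
  refine ⟨3, ?_⟩
  filter_upwards [abs__le_one_near] with Δ hΔ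
  have h1 : |Real.exp (-Δ) - 1 - (-Δ)| ≤ (-Δ)^2 := Real.abs_exp_sub_one_sub_id_le (by simpa using hΔ)
  have h2 : |Real.exp (-Δ) - 1| ≤ 2 * |(-Δ)| := Real.abs_exp_sub_one_le (by simpa using hΔ)
  have key : (1 + Δ) * Real.exp (-Δ) - 1
      = (Real.exp (-Δ) - 1 - (-Δ)) + Δ * (Real.exp (-Δ) - 1) := by ring
  rw [key]
  calc |(Real.exp (-Δ) - 1 - (-Δ)) + Δ * (Real.exp (-Δ) - 1)|
      ≤ |Real.exp (-Δ) - 1 - (-Δ)| + |Δ * (Real.exp (-Δ) - 1)| := abs_add_le _ _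
    _ ≤ (-Δ)^2 + |Δ| * (2 * |(-Δ)|) := by
        refine add_le_add h1 ?_
        rw [abs_mul]
        exact mul_le_mul_of_nonneg_left h2 (abs_nonneg _)
    _ ≤ 3 * |Δ ^ 2| := by
        have h3 : |Δ| * (2 * |Δ|) = 2 * Δ^2 := by rw [← sq_abs Δ]; ring
        rw [abs_neg, h3, neg_pow, abs_of_nonneg (sq_nonneg Δ)]
        nlinarith [sq_nonneg Δ]

lemma coef2_bigO : (fun Δ : ℝ => (1 - Real.exp (-Δ)) * Δ) =O[𝓝 0] fun Δ : ℝ => Δ ^ 2 := by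
  rw [isBigO_iff]
  refine ⟨2, ?_⟩
  filter_upwards [abs__le_one_near] with Δ hΔ
  have h2 : |Real.exp (-Δ) - 1| ≤ 2 * |Δ| := by
    simpa using Real.abs_exp_sub_one_le (x := -Δ) (by simpa using hΔ)
  have : |(1 - Real.exp (-Δ)) * Δ| = |Real.exp (-Δ) - 1| * |Δ| := by
    rw [← abs_mul, ← abs_neg]; ring_nf
  simp only [Real.norm_eq_abs]
  rw [this]
  calc |Real.exp (-Δ) - 1| * |Δ| ≤ 2 * |Δ| * |Δ| :=
        mul_le_mul_of_nonneg_right h2 (abs_nonneg _)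
    _ = 2 * |Δ ^ 2| := by rw [← sq_abs Δ]; rw [abs_of_nonneg (sq_nonneg |Δ|)]; ring

lemma smul_bigO {E : Type*} [NormedAddCommGroup E] [NormedSpace ℝ E]
    {f : ℝ → ℝ} (h : f =O[𝓝 0] fun Δ : ℝ => Δ ^ 2) (v : E) :
    (fun Δ => f Δ • v) =O[𝓝 0] fun Δ : ℝ => Δ ^ 2 := by
  calc (fun Δ => f Δ • v) =O[𝓝 0] f := by
        rw [isBigO_iff]
        exact ⟨‖v‖, Eventually.of_forall fun Δ => by
          simp [norm_smul, mul_comm]⟩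
    _ =O[𝓝 0] fun Δ : ℝ => Δ ^ 2 := h

/-- Discretization discrepancy between the noise-prediction and
data-prediction Euler updates: they differ at order O(Δ²). -/
theorem euler_update_discrepancy
    {E : Type*} [NormedAddCommGroup E] [NormedSpace ℝ E]
    (c s : ℝ) (x ε : E) :
    (∀ Δ : ℝ,
      (c • (((1 + Δ) * Real.exp (-Δ)) • x - (Real.exp (-Δ) * s * Δ) • ε))
        - (c • (x - (s * Δ) • ε))
      = c • ((((1 + Δ) * Real.exp (-Δ) - 1)) • x
          + ((1 - Real.exp (-Δ)) * s * Δ) • ε)) ∧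
    ((fun Δ : ℝ =>
        (c • (((1 + Δ) * Real.exp (-Δ)) • x - (Real.exp (-Δ) * s * Δ) • ε))
          - (c • (x - (s * Δ) • ε)))
      =O[𝓝 0] fun Δ : ℝ => Δ ^ 2) ∧
    ((fun Δ : ℝ => (1 + Δ) * Real.exp (-Δ) - 1) =O[𝓝 0] fun Δ : ℝ => Δ ^ 2) ∧
    ((fun Δ : ℝ => (1 - Real.exp (-Δ)) * Δ) =O[𝓝 0] fun Δ : ℝ => Δ ^ 2) := by
  have hid : ∀ Δ : ℝ,
      (c • (((1 + Δ) * Real.exp (-Δ)) • x - (Real.exp (-Δ) * s * Δ) • ε))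
        - (c • (x - (s * Δ) • ε))
      = c • ((((1 + Δ) * Real.exp (-Δ) - 1)) • x
          + ((1 - Real.exp (-Δ)) * s * Δ) • ε) := by
    intro Δ; module
  refine ⟨hid, ?_, coef1_bigO, coef2_bigO⟩
  have h1 : (fun Δ : ℝ => ((1 + Δ) * Real.exp (-Δ) - 1) • x) =O[𝓝 0]
      fun Δ : ℝ => Δ ^ 2 := smul_bigO coef1_bigO x
  have h2 : (fun Δ : ℝ => ((1 - Real.exp (-Δ)) * s * Δ) • ε) =O[𝓝 0]
      fun Δ : ℝ => Δ ^ 2 := by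
    have := smul_bigO (coef2_bigO.const_mul_left s) ε
    simpa [mul_assoc, mul_comm, mul_left_comm] using this
  have := ((h1.add h2).const_smul_left c)
  calc (fun Δ : ℝ =>
        (c • (((1 + Δ) * Real.exp (-Δ)) • x - (Real.exp (-Δ) * s * Δ) • ε))
          - (c • (x - (s * Δ) • ε)))
      = fun Δ : ℝ => c • ((((1 + Δ) * Real.exp (-Δ) - 1)) • x
          + ((1 - Real.exp (-Δ)) * s * Δ) • ε) := funext hid
    _ =O[𝓝 0] fun Δ : ℝ => Δ ^ 2 := by simpa [smul_add, Pi.smul_def] using this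
end
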